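/- arXiv:1401.7381 — 4 statements merged into one kernel-verified Lean document; each statement's English description precedes it below -/
import Mathlib

section
/- For all integers k ≥ 2 and N ≥ 1 and 0 ≤ n ≤ N, the number of k-uniform rooted forests with vertex set [N] and root set [n] equals n·(N−n)!·N^{m̃−1}/( m̃! · ((k−1)!)^{m̃} ) if m̃ := (N−n)/(k−1) is a nonnegative integer, and equals 0 otherwise. (Here m̃ is the number of edges of such a forest.) -/
namespace Stmt1

/-- Two vertices are adjacent in a hypergraph if some edge contains both. -/
def adj {N : ℕ} (H : Finset (Finset (Fin N))) (u v : Fin N) : Prop :=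
  ∃ e ∈ H, u ∈ e ∧ v ∈ e

/-- `u` and `v` are joined by a path iff `v` is reachable from `u` by steps along edges. -/
def Reach {N : ℕ} (H : Finset (Finset (Fin N))) : Fin N → Fin N → Prop :=
  Relation.ReflTransGen (adj H)

/-- A cycle: a sequence `(v_0, E_0, …, v_k, E_k)` (with at least two edges) of distinct
vertices and distinct edges such that `v_i ∈ E_i` and `v_{i+1} ∈ E_i`, indices mod `k+1`. -/
def HasCycle {N : ℕ} (H : Finset (Finset (Fin N))) : Prop :=
  ∃ (k : ℕ) (v : Fin (k + 2) → Fin N) (E : Fin (k + 2) → Finset (Fin N)),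
    Function.Injective v ∧ Function.Injective E ∧
    (∀ i, E i ∈ H) ∧ (∀ i, v i ∈ E i ∧ v (i + 1) ∈ E i)

/-- A forest is a hypergraph with no cycle. -/
def IsForest {N : ℕ} (H : Finset (Finset (Fin N))) : Prop := ¬ HasCycle H

/-- A rooted forest with root set `S`: a forest in which every connected component
contains exactly one vertex of `S` (every vertex reaches exactly one root). -/
def IsRootedForest {N : ℕ} (H : Finset (Finset (Fin N))) (S : Set (Fin N)) : Prop :=
  IsForest H ∧ ∀ v : Fin N, ∃! r : Fin N, r ∈ S ∧ Reach H v r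

/-- Number of `k`-uniform rooted forests with vertex set `[N]` and root set `[n]`. -/
noncomputable def numRootedForests (N n k : ℕ) : ℕ :=
  Set.ncard {H : Finset (Finset (Fin N)) |
    (∀ e ∈ H, e.card = k) ∧ IsRootedForest H {v : Fin N | (v : ℕ) < n}}


variable {N : ℕ}


lemma adj_symm {H : Finset (Finset (Fin N))} {u v : Fin N} (h : adj H u v) : adj H v u := by
  obtain ⟨e, he, hu, hv⟩ := h; exact ⟨e, he, hv, hu⟩

lemma Reach.rfl' {H : Finset (Finset (Fin N))} {v : Fin N} : Reach H v v :=
  Relation.ReflTransGen.refl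

lemma Reach.trans' {H : Finset (Finset (Fin N))} {u v w : Fin N}
    (h1 : Reach H u v) (h2 : Reach H v w) : Reach H u w :=
  Relation.ReflTransGen.trans h1 h2

lemma Reach.symm' {H : Finset (Finset (Fin N))} {u v : Fin N} (h : Reach H u v) :
    Reach H v u := by
  induction h with
  | refl => exact Relation.ReflTransGen.refl
  | tail _ hbc ih =>
      exact Relation.ReflTransGen.trans (Relation.ReflTransGen.single (adj_symm hbc)) ih

lemma reach_mono {H H' : Finset (Finset (Fin N))} (hsub : H ⊆ H') {u v : Fin N}
    (h : Reach H u v) : Reach H' u v := by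
  induction h with
  | refl => exact Relation.ReflTransGen.refl
  | tail _ hbc ih =>
      obtain ⟨e, he, h1, h2⟩ := hbc
      exact Relation.ReflTransGen.tail ih ⟨e, hsub he, h1, h2⟩

lemma reach_of_mem {H : Finset (Finset (Fin N))} {e : Finset (Fin N)} (he : e ∈ H)
    {x y : Fin N} (hx : x ∈ e) (hy : y ∈ e) : Reach H x y :=
  Relation.ReflTransGen.single ⟨e, he, hx, hy⟩

lemma reach_insert_iff {H : Finset (Finset (Fin N))} {e : Finset (Fin N)} {v w : Fin N} :
    Reach (insert e H) v w ↔
      Reach H v w ∨ ∃ x ∈ e, ∃ y ∈ e, Reach H v x ∧ Reach H y w := by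
  constructor
  · intro h
    induction h with
    | refl => exact Or.inl Relation.ReflTransGen.refl
    | tail _ hbc ih =>
        obtain ⟨f, hf, hb, hc⟩ := hbc
        rcases Finset.mem_insert.1 hf with rfl | hfH
        · rcases ih with h1 | ⟨x, hx, y, hy, h1, h2⟩
          · exact Or.inr ⟨_, hb, _, hc, h1, Relation.ReflTransGen.refl⟩
          · exact Or.inr ⟨x, hx, _, hc, h1, Relation.ReflTransGen.refl⟩
        · rcases ih with h1 | ⟨x, hx, y, hy, h1, h2⟩
          · exact Or.inl (Relation.ReflTransGen.tail h1 ⟨f, hfH, hb, hc⟩)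
          · exact Or.inr ⟨x, hx, y, hy, h1, Relation.ReflTransGen.tail h2 ⟨f, hfH, hb, hc⟩⟩
  · rintro (h | ⟨x, hx, y, hy, h1, h2⟩)
    · exact reach_mono (Finset.subset_insert _ _) h
    · exact Reach.trans' (reach_mono (Finset.subset_insert _ _) h1)
        (Reach.trans' (reach_of_mem (Finset.mem_insert_self _ _) hx hy)
          (reach_mono (Finset.subset_insert _ _) h2))

lemma reach_erase_decomp {H : Finset (Finset (Fin N))} {e : Finset (Fin N)} {v w : Fin N}
    (h : Reach H v w) :
    Reach (H.erase e) v w ∨ ∃ y ∈ e, Reach (H.erase e) v y := by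
  induction h with
  | refl => exact Or.inl Relation.ReflTransGen.refl
  | tail _ hbc ih =>
      obtain ⟨f, hf, hb, hc⟩ := hbc
      by_cases hfe : f = e
      · subst hfe
        rcases ih with h1 | h1
        · exact Or.inr ⟨_, hb, h1⟩
        · exact Or.inr h1
      · rcases ih with h1 | h1
        · exact Or.inl (Relation.ReflTransGen.tail h1 ⟨f, Finset.mem_erase.2 ⟨hfe, hf⟩, hb, hc⟩)
        · exact Or.inr h1



/-- walk of length n from w 0 to w n -/
def IsWalk (H : Finset (Finset (Fin N))) (n : ℕ) (w : ℕ → Fin N)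
    (f : ℕ → Finset (Fin N)) : Prop :=
  ∀ i < n, f i ∈ H ∧ w i ∈ f i ∧ w (i + 1) ∈ f i

lemma reach_iff_walk {H : Finset (Finset (Fin N))} {x y : Fin N} :
    Reach H x y ↔ ∃ n w f, IsWalk H n w f ∧ w 0 = x ∧ w n = y := by
  constructor
  · intro h
    induction h with
    | refl => exact ⟨0, fun _ => x, fun _ => ∅, fun i hi => absurd hi (Nat.not_lt_zero i),
        rfl, rfl⟩
    | @tail b c hab hbc ih =>
        obtain ⟨n, w, f, hw, h0, hn⟩ := ih
        obtain ⟨e, he, hb, hc⟩ := hbc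
        refine ⟨n + 1, fun t => if t ≤ n then w t else c, fun t => if t < n then f t else e,
          ?_, ?_, ?_⟩
        · intro i hi
          dsimp only
          rcases Nat.lt_or_ge i n with h1 | h1
          · rw [if_pos h1, if_pos (le_of_lt h1), if_pos (Nat.succ_le_of_lt h1)]
            exact hw i h1
          · have h2 : i = n := by omega
            rw [h2, if_neg (lt_irrefl n), if_pos (le_refl n),
              if_neg (by omega : ¬ n + 1 ≤ n), hn]
            exact ⟨he, hb, hc⟩
        · dsimp only; rw [if_pos (Nat.zero_le n)]; exact h0
        · dsimp only; rw [if_neg (by omega : ¬ n + 1 ≤ n)]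
  · rintro ⟨n, w, f, hw, rfl, rfl⟩
    have key : ∀ i ≤ n, Reach H (w 0) (w i) := by
      intro i hi
      induction i with
      | zero => exact Relation.ReflTransGen.refl
      | succ j ih =>
          have h1 := hw j (by omega)
          exact Relation.ReflTransGen.tail (ih (by omega)) ⟨f j, h1.1, h1.2.1, h1.2.2⟩
    exact key n le_rfl

lemma walk_shortcut {H : Finset (Finset (Fin N))} {n : ℕ} {w : ℕ → Fin N}
    {f : ℕ → Finset (Fin N)} (hw : IsWalk H n w f) {i j : ℕ} (hij : i < j) (hjn : j ≤ n)
    (hdup : w i = w j ∨ (f i = f j ∧ j < n)) :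
    ∃ w' f', IsWalk H (n - (j - i)) w' f' ∧ w' 0 = w 0 ∧ w' (n - (j - i)) = w n := by
  refine ⟨fun t => if t ≤ i then w t else w (t + (j - i)),
    fun t => if t < i then f t else f (t + (j - i)), ?_, ?_, ?_⟩
  · intro t ht
    dsimp only
    have htn : t + (j - i) < n := by omega
    rcases Nat.lt_or_ge t i with h1 | h1
    · rw [if_pos h1, if_pos (le_of_lt h1), if_pos (Nat.succ_le_of_lt h1)]
      exact hw t (by omega)
    · rw [if_neg (not_lt.2 h1), if_neg (by omega : ¬ t + 1 ≤ i)]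
      have hstep := hw (t + (j - i)) htn
      have h5 : t + 1 + (j - i) = t + (j - i) + 1 := by omega
      rcases Nat.eq_or_lt_of_le h1 with h6 | h6
      · -- t = i (note h6 : i = t), the glue step
        have hidj : t + (j - i) = j := by omega
        rw [if_pos (by omega : t ≤ i), h5, hidj]
        rw [hidj] at hstep
        rcases hdup with hv | ⟨hf, _⟩
        · have : w t = w j := by rw [← h6]; exact hv
          exact ⟨hstep.1, by rw [this]; exact hstep.2.1, hstep.2.2⟩
        · have h7 := hw t (by omega)
          have : f t = f j := by rw [← h6]; exact hf
          exact ⟨hstep.1, by rw [← this]; exact h7.2.1, hstep.2.2⟩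
      · rw [if_neg (by omega : ¬ t ≤ i), h5]
        exact hstep
  · dsimp only; rw [if_pos (Nat.zero_le i)]
  · dsimp only
    by_cases h2 : n - (j - i) ≤ i
    · have h3 : j = n := by omega
      have h4 : n - (j - i) = i := by omega
      rw [if_pos h2, h4]
      rcases hdup with hv | ⟨_, hf⟩
      · rw [hv, h3]
      · omega
    · rw [if_neg h2, Nat.sub_add_cancel (by omega : j - i ≤ n)]

lemma hasCycle_of_reach_erase {H : Finset (Finset (Fin N))} {e : Finset (Fin N)}
    (he : e ∈ H) {x y : Fin N} (hx : x ∈ e) (hy : y ∈ e) (hxy : x ≠ y)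
    (h : Reach (H.erase e) x y) : HasCycle H := by
  obtain ⟨n, w, f, hw, h0, hn⟩ := reach_iff_walk.1 h
  clear h
  induction n using Nat.strong_induction_on generalizing w f with
  | _ n ih =>
  by_cases hdup : ∃ i j, i < j ∧ j ≤ n ∧ (w i = w j ∨ (f i = f j ∧ j < n))
  · obtain ⟨i, j, hij, hjn, hd⟩ := hdup
    obtain ⟨w', f', hw', h0', hn'⟩ := walk_shortcut hw hij hjn hd
    exact ih (n - (j - i)) (by omega) w' f' hw' (h0'.trans h0) (hn'.trans hn)
  · push_neg at hdup
    have hvd : ∀ i j, i < j → j ≤ n → w i ≠ w j := fun i j h1 h2 => (hdup i j h1 h2).1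
    have hed : ∀ i j, i < j → j < n → f i ≠ f j := by
      intro i j h1 h2 hc
      exact absurd h2 (not_lt.2 ((hdup i j h1 (le_of_lt h2)).2 hc))
    have hn1 : 1 ≤ n := by
      by_contra h1
      have h2 : n = 0 := by omega
      rw [h2] at hn
      exact hxy (h0 ▸ hn ▸ rfl)
    obtain ⟨m, rfl⟩ : ∃ m, n = m + 1 := ⟨n - 1, by omega⟩
    refine ⟨m, fun t => w t.val, fun t => if t.val < m + 1 then f t.val else e, ?_, ?_, ?_, ?_⟩
    · intro a b hab
      dsimp only at hab
      by_contra hne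
      have hne' : a.val ≠ b.val := fun hc => hne (Fin.ext hc)
      rcases Nat.lt_or_ge a.val b.val with h1 | h1
      · exact hvd a.val b.val h1 (by omega) hab
      · exact hvd b.val a.val (by omega) (by omega) hab.symm
    · intro a b hab
      dsimp only at hab
      by_contra hne
      have hne' : a.val ≠ b.val := fun hc => hne (Fin.ext hc)
      by_cases ha : a.val < m + 1 <;> by_cases hb : b.val < m + 1
      · rw [if_pos ha, if_pos hb] at hab
        rcases Nat.lt_or_ge a.val b.val with h1 | h1
        · exact hed a.val b.val h1 hb hab
        · exact hed b.val a.val (by omega) ha hab.symm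
      · rw [if_pos ha, if_neg hb] at hab
        exact (Finset.mem_erase.1 (hw a.val ha).1).1 (by rw [hab])
      · rw [if_neg ha, if_pos hb] at hab
        exact (Finset.mem_erase.1 (hw b.val hb).1).1 (by rw [hab])
      · exact hne' (by omega)
    · intro t
      dsimp only
      by_cases ht : t.val < m + 1
      · rw [if_pos ht]
        exact Finset.mem_of_mem_erase (hw t.val ht).1
      · rw [if_neg ht]
        exact he
    · intro t
      dsimp only
      by_cases ht : t.val < m + 1
      · rw [if_pos ht]
        have hstep := hw t.val ht
        refine ⟨hstep.2.1, ?_⟩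
        have hv : ((t + 1 : Fin (m + 2)) : ℕ) = t.val + 1 := by
          have hlt : t < Fin.last (m + 1) := by
            rw [Fin.lt_iff_val_lt_val, Fin.val_last]; exact ht
          rw [Fin.val_add_one_of_lt hlt]
        rw [hv]
        exact hstep.2.2
      · rw [if_neg ht]
        have htv : t.val = m + 1 := by have := t.isLt; omega
        have hv : ((t + 1 : Fin (m + 2)) : ℕ) = 0 := by
          have : t = Fin.last (m + 1) := Fin.ext (by rw [htv]; rfl)
          rw [this]
          simp
        constructor
        · show w t.val ∈ e
          rw [htv, hn]; exact hy
        · show w ((t + 1 : Fin (m + 2)) : ℕ) ∈ e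
          rw [hv, h0]; exact hx



open Fin.NatCast in
lemma reach_erase_of_hasCycle {H : Finset (Finset (Fin N))} {e : Finset (Fin N)}
    (hcyc : HasCycle H) (hfor : ¬ HasCycle (H.erase e)) :
    ∃ x ∈ e, ∃ y ∈ e, x ≠ y ∧ Reach (H.erase e) x y := by
  obtain ⟨k, v, E, hv, hE, hEH, hcond⟩ := hcyc
  by_cases hj : ∃ j, E j = e
  · obtain ⟨j, hj⟩ := hj
    have key : ∀ d : ℕ, d ≤ k + 1 →
        Reach (H.erase e) (v (j + 1)) (v (j + 1 + (d : Fin (k + 2)))) := by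
      intro d
      induction d with
      | zero => intro _; simp only [Nat.cast_zero, add_zero]; exact Relation.ReflTransGen.refl
      | succ d ihd =>
          intro hd
          have h1 := ihd (by omega)
          have hne : j + 1 + (d : Fin (k + 2)) ≠ j := by
            intro hc
            have h2 : j + (1 + (d : Fin (k + 2))) = j + 0 := by
              rw [add_zero, ← add_assoc]; exact hc
            have h3 : (1 : Fin (k+2)) + (d : Fin (k + 2)) = 0 := add_left_cancel h2
            have h4 : ((1 + d : ℕ) : Fin (k + 2)) = 0 := by push_cast; exact h3
            have h5 : (k + 2) ∣ (1 + d) := (Fin.natCast_eq_zero).1 h4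
            have h6 := Nat.le_of_dvd (by omega) h5
            omega
          have hEe : E (j + 1 + (d : Fin (k + 2))) ∈ H.erase e :=
            Finset.mem_erase.2 ⟨fun hc => hne (hE (by rw [hc, hj])), hEH _⟩
          have hstep := hcond (j + 1 + (d : Fin (k + 2)))
          have hcast : ((d + 1 : ℕ) : Fin (k + 2)) = (d : Fin (k + 2)) + 1 := by push_cast; rfl
          rw [hcast, ← add_assoc]
          exact Relation.ReflTransGen.tail h1 ⟨_, hEe, hstep.1, hstep.2⟩
    have hlast : j + 1 + ((k + 1 : ℕ) : Fin (k + 2)) = j := by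
      have h1 : (1 : Fin (k + 2)) + ((k + 1 : ℕ) : Fin (k + 2)) = 0 := by
        have : ((k + 2 : ℕ) : Fin (k + 2)) = 0 := by
          simp [Fin.natCast_self]
        push_cast at this ⊢
        rw [← this, add_comm (1 : Fin (k + 2)), add_assoc]; exact congrArg _ one_add_one_eq_two
      rw [add_assoc, h1, add_zero]
    have hR := key (k + 1) le_rfl
    rw [hlast] at hR
    refine ⟨v (j + 1), ?_, v j, ?_, ?_, hR⟩
    · rw [← hj]; exact (hcond j).2
    · rw [← hj]; exact (hcond j).1
    · intro hc
      have h1 : j + 1 = j := hv hc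
      have h2 : j + 1 = j + 0 := by rw [add_zero]; exact h1
      have h3 : (1 : Fin (k + 2)) = 0 := add_left_cancel h2
      have h4 : ((1 : Fin (k + 2)) : ℕ) = 1 := by
        rw [Fin.val_one]
      rw [h3] at h4
      simp at h4
  · push_neg at hj
    exact absurd ⟨k, v, E, hv, hE, fun i => Finset.mem_erase.2 ⟨hj i, hEH i⟩, hcond⟩ hfor

open scoped Classical

/-- A state: current hypergraph and current mark function. -/
abbrev St (N : ℕ) := Finset (Finset (Fin N)) × (Fin N → Fin N)
/-- A move: a parent vertex and the set of marks to merge. -/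
abbrev Mv (N : ℕ) := Fin N × Finset (Fin N)

def step (s : St N) (p : Mv N) : St N :=
  (insert (insert p.1 p.2) s.1, fun v => if s.2 v ∈ p.2 then s.2 p.1 else s.2 v)

def state : List (Mv N) → St N
  | [] => (∅, id)
  | p :: l => step (state l) p

def ValidMove (k : ℕ) (s : St N) (p : Mv N) : Prop :=
  p.2.card = k - 1 ∧ (∀ t ∈ p.2, s.2 t = t) ∧ s.2 p.1 ∉ p.2

def Valid (k : ℕ) : List (Mv N) → Prop
  | [] => True
  | p :: l => Valid k l ∧ ValidMove k (state l) p

def Good (k : ℕ) (s : St N) : Prop :=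
  (∀ e ∈ s.1, e.card = k) ∧ IsForest s.1 ∧
  (∀ v w, Reach s.1 v w ↔ s.2 v = s.2 w) ∧ (∀ v, Reach s.1 v (s.2 v))

noncomputable def Fix (s : St N) : Finset (Fin N) :=
  Finset.univ.filter (fun v => s.2 v = v)

lemma mem_Fix {s : St N} {v : Fin N} : v ∈ Fix s ↔ s.2 v = v := by
  simp [Fix]

lemma good_init : Good k ((∅, id) : St N) := by
  have hr : ∀ v w : Fin N, Reach (∅ : Finset (Finset (Fin N))) v w ↔ v = w := by
    intro v w
    constructor
    · intro h
      induction h with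
      | refl => rfl
      | tail _ hbc ih => obtain ⟨e, he, _⟩ := hbc; exact absurd he (Finset.notMem_empty e)
    · rintro rfl; exact Relation.ReflTransGen.refl
  refine ⟨fun e he => absurd he (Finset.notMem_empty e), ?_, ?_, ?_⟩
  · rintro ⟨kk, v, E, _, _, hEH, _⟩
    exact absurd (hEH 0) (Finset.notMem_empty _)
  · intro v w; rw [hr]; exact Iff.rfl
  · intro v; exact Relation.ReflTransGen.refl

section StepLemmas

variable {k : ℕ} {s : St N} {p : Mv N}

lemma good_idem (hs : Good k s) (v : Fin N) : s.2 (s.2 v) = s.2 v :=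
  ((hs.2.2.1 v (s.2 v)).1 (hs.2.2.2 v)).symm

lemma validMove_parent_not_mem (hs : Good k s) (hp : ValidMove k s p) : p.1 ∉ p.2 := by
  intro hc
  exact hp.2.2 (by rw [hp.2.1 p.1 hc]; exact hc)

lemma step_card_edge (hk : 2 ≤ k) (hs : Good k s) (hp : ValidMove k s p) :
    (insert p.1 p.2).card = k := by
  rw [Finset.card_insert_of_notMem (validMove_parent_not_mem hs hp), hp.1]
  omega

lemma step_edge_not_mem (hk : 2 ≤ k) (hs : Good k s) (hp : ValidMove k s p) :
    insert p.1 p.2 ∉ s.1 := by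
  intro hc
  obtain ⟨t, ht⟩ := Finset.card_pos.1 (by rw [hp.1]; omega : 0 < p.2.card)
  have h1 : Reach s.1 p.1 t :=
    reach_of_mem hc (Finset.mem_insert_self _ _) (Finset.mem_insert_of_mem ht)
  have h2 : s.2 p.1 = s.2 t := (hs.2.2.1 _ _).1 h1
  rw [hp.2.1 t ht] at h2
  exact hp.2.2 (h2 ▸ ht)

/-- marks of the vertices of the new edge -/
lemma step_mark_mem (hs : Good k s) (hp : ValidMove k s p) {x : Fin N}
    (hx : x ∈ insert p.1 p.2) : s.2 x ∈ insert (s.2 p.1) p.2 := by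
  rcases Finset.mem_insert.1 hx with rfl | hxT
  · exact Finset.mem_insert_self _ _
  · rw [hp.2.1 x hxT]; exact Finset.mem_insert_of_mem hxT

lemma step_mark_inj (hs : Good k s) (hp : ValidMove k s p) {x y : Fin N}
    (hx : x ∈ insert p.1 p.2) (hy : y ∈ insert p.1 p.2) (hxy : x ≠ y) :
    s.2 x ≠ s.2 y := by
  rcases Finset.mem_insert.1 hx with rfl | hxT <;> rcases Finset.mem_insert.1 hy with rfl | hyT
  · exact absurd rfl hxy
  · rw [hp.2.1 y hyT]; intro hc; exact hp.2.2 (hc ▸ hyT)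
  · rw [hp.2.1 x hxT]; intro hc; exact hp.2.2 (hc ▸ hxT)
  · rw [hp.2.1 x hxT, hp.2.1 y hyT]; exact hxy

lemma step_forest (hk : 2 ≤ k) (hs : Good k s) (hp : ValidMove k s p) :
    IsForest (step s p).1 := by
  intro hcyc
  have herase : (step s p).1.erase (insert p.1 p.2) = s.1 :=
    Finset.erase_insert (step_edge_not_mem hk hs hp)
  have hfor : ¬ HasCycle ((step s p).1.erase (insert p.1 p.2)) := by
    rw [herase]; exact hs.2.1
  obtain ⟨x, hx, y, hy, hxy, hR⟩ := reach_erase_of_hasCycle hcyc hfor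
  rw [herase] at hR
  exact step_mark_inj hs hp hx hy hxy ((hs.2.2.1 _ _).1 hR)

/-- The new mark function, described via the merged set of marks. -/
lemma step_mark_eq (hs : Good k s) (hp : ValidMove k s p) (v : Fin N) :
    (step s p).2 v = if s.2 v ∈ insert (s.2 p.1) p.2 then s.2 p.1 else s.2 v := by
  show (if s.2 v ∈ p.2 then s.2 p.1 else s.2 v) = _
  by_cases h1 : s.2 v ∈ p.2
  · rw [if_pos h1, if_pos (Finset.mem_insert_of_mem h1)]
  · rw [if_neg h1]
    by_cases h2 : s.2 v = s.2 p.1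
    · rw [if_pos (by rw [h2]; exact Finset.mem_insert_self _ _), h2]
    · rw [if_neg (by simp [h2, h1])]

lemma step_reach_iff (hk : 2 ≤ k) (hs : Good k s) (hp : ValidMove k s p) (v w : Fin N) :
    Reach (step s p).1 v w ↔ (step s p).2 v = (step s p).2 w := by
  set e := insert p.1 p.2 with he
  set M := insert (s.2 p.1) p.2 with hM
  have hmem : ∀ z : Fin N, (∃ x ∈ e, Reach s.1 z x) ↔ s.2 z ∈ M := by
    intro z
    constructor
    · rintro ⟨x, hx, hR⟩
      rw [(hs.2.2.1 _ _).1 hR]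
      exact step_mark_mem hs hp hx
    · intro hz
      rcases Finset.mem_insert.1 hz with h1 | h1
      · exact ⟨p.1, Finset.mem_insert_self _ _, (hs.2.2.1 _ _).2 h1⟩
      · refine ⟨s.2 z, Finset.mem_insert_of_mem h1, hs.2.2.2 z⟩
  have hrw : Reach (step s p).1 v w ↔
      (Reach s.1 v w ∨ (s.2 v ∈ M ∧ s.2 w ∈ M)) := by
    show Reach (insert e s.1) v w ↔ _
    rw [reach_insert_iff]
    constructor
    · rintro (h | ⟨x, hx, y, hy, h1, h2⟩)
      · exact Or.inl h
      · exact Or.inr ⟨(hmem v).1 ⟨x, hx, h1⟩, (hmem w).1 ⟨y, hy, h2.symm'⟩⟩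
    · rintro (h | ⟨h1, h2⟩)
      · exact Or.inl h
      · obtain ⟨x, hx, hvx⟩ := (hmem v).2 h1
        obtain ⟨y, hy, hwy⟩ := (hmem w).2 h2
        exact Or.inr ⟨x, hx, y, hy, hvx, hwy.symm'⟩
  rw [hrw, step_mark_eq hs hp, step_mark_eq hs hp, hs.2.2.1]
  by_cases h1 : s.2 v ∈ M <;> by_cases h2 : s.2 w ∈ M
  · rw [if_pos h1, if_pos h2]
    tauto
  · rw [if_pos h1, if_neg h2]
    constructor
    · rintro (h | ⟨_, hc⟩)
      · rw [← h] at h2; exact absurd h1 h2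
      · exact absurd hc h2
    · intro h; rw [← h] at h2
      exact absurd (Finset.mem_insert_self _ _ : s.2 p.1 ∈ M) h2
  · rw [if_neg h1, if_pos h2]
    constructor
    · rintro (h | ⟨hc, _⟩)
      · rw [h] at h1; exact absurd h2 h1
      · exact absurd hc h1
    · intro h; rw [h] at h1
      exact absurd (Finset.mem_insert_self _ _ : s.2 p.1 ∈ M) h1
  · rw [if_neg h1, if_neg h2]
    tauto

lemma step_reach_mark (hk : 2 ≤ k) (hs : Good k s) (hp : ValidMove k s p) (v : Fin N) :
    Reach (step s p).1 v ((step s p).2 v) := by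
  have hsub : s.1 ⊆ (step s p).1 := Finset.subset_insert _ _
  rw [step_mark_eq hs hp]
  by_cases h1 : s.2 v ∈ insert (s.2 p.1) p.2
  · rw [if_pos h1]
    have h2 : Reach (step s p).1 v (s.2 v) := reach_mono hsub (hs.2.2.2 v)
    have hin : insert p.1 p.2 ∈ (step s p).1 := Finset.mem_insert_self _ _
    rcases Finset.mem_insert.1 h1 with h3 | h3
    · rw [h3] at h2
      exact h2
    · have h4 : Reach (step s p).1 (s.2 v) p.1 :=
        reach_of_mem hin (Finset.mem_insert_of_mem h3) (Finset.mem_insert_self _ _)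
      exact (h2.trans' h4).trans' (reach_mono hsub (hs.2.2.2 p.1))
  · rw [if_neg h1]
    exact reach_mono hsub (hs.2.2.2 v)

lemma step_good (hk : 2 ≤ k) (hs : Good k s) (hp : ValidMove k s p) :
    Good k (step s p) := by
  refine ⟨?_, step_forest hk hs hp, step_reach_iff hk hs hp, step_reach_mark hk hs hp⟩
  intro f hf
  rcases Finset.mem_insert.1 hf with rfl | hfH
  · exact step_card_edge hk hs hp
  · exact hs.1 f hfH

lemma step_fix (hs : Good k s) (hp : ValidMove k s p) :
    Fix (step s p) = Fix s \ p.2 := by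
  ext v
  rw [mem_Fix, Finset.mem_sdiff, mem_Fix, step_mark_eq hs hp]
  by_cases h1 : s.2 v ∈ insert (s.2 p.1) p.2
  · rw [if_pos h1]
    constructor
    · intro h2
      have h3 : s.2 v = v := by rw [← h2, good_idem hs p.1]
      refine ⟨h3, fun hc => ?_⟩
      rw [← h2] at hc
      exact hp.2.2 hc
    · rintro ⟨h2, h3⟩
      rw [h2] at h1
      rcases Finset.mem_insert.1 h1 with h4 | h4
      · exact h4.symm
      · exact absurd h4 h3
  · rw [if_neg h1]
    constructor
    · intro h2
      refine ⟨h2, fun hc => ?_⟩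
      rw [h2] at h1
      exact h1 (Finset.mem_insert_of_mem hc)
    · rintro ⟨h2, _⟩; exact h2

end StepLemmas

lemma valid_good {k : ℕ} (hk : 2 ≤ k) : ∀ l : List (Mv N), Valid k l → Good k (state l)
  | [], _ => good_init
  | p :: l, h => step_good hk (valid_good hk l h.1) h.2

lemma valid_card {k : ℕ} (hk : 2 ≤ k) :
    ∀ l : List (Mv N), Valid k l → (state l).1.card = l.length
  | [], _ => rfl
  | p :: l, h => by
      show (insert (insert p.1 p.2) (state l).1).card = l.length + 1
      rw [Finset.card_insert_of_notMem (step_edge_not_mem hk (valid_good hk l h.1) h.2),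
        valid_card hk l h.1]

lemma valid_fix_card {k : ℕ} (hk : 2 ≤ k) :
    ∀ l : List (Mv N), Valid k l → (Fix (state l)).card + l.length * (k - 1) = N
  | [], _ => by simp [Fix, state]
  | p :: l, h => by
      have hgood := valid_good hk l h.1
      have hfix := valid_fix_card hk l h.1
      have hsub : p.2 ⊆ Fix (state l) := fun t ht => mem_Fix.2 (h.2.2.1 t ht)
      show (Fix (step (state l) p)).card + (l.length + 1) * (k - 1) = N
      rw [step_fix hgood h.2, Finset.card_sdiff_of_subset hsub, h.2.1, add_mul, one_mul]
      have hk1 : k - 1 ≤ (Fix (state l)).card := by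
        rw [← h.2.1]; exact Finset.card_le_card hsub
      omega

lemma cons_inj_left {α : Type*} (l : List α) :
    Function.Injective (fun a : α => a :: l) := by
  intro a b h
  injection h

noncomputable def movesFinset (k : ℕ) (s : St N) : Finset (Mv N) :=
  Finset.univ.filter (ValidMove k s)

lemma mem_movesFinset {k : ℕ} {s : St N} {p : Mv N} :
    p ∈ movesFinset k s ↔ ValidMove k s p := by
  simp [movesFinset]

lemma card_movesFinset {k : ℕ} {s : St N} (hs : Good k s) :
    (movesFinset k s).card = N * Nat.choose ((Fix s).card - 1) (k - 1) := by
  have heq : movesFinset k s = Finset.univ.biUnion (fun u : Fin N =>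
      (Finset.powersetCard (k - 1) ((Fix s).erase (s.2 u))).image (fun T => (u, T))) := by
    ext ⟨u, T⟩
    rw [mem_movesFinset, Finset.mem_biUnion]
    constructor
    · intro hv
      refine ⟨u, Finset.mem_univ u, Finset.mem_image.2 ⟨T, ?_, rfl⟩⟩
      rw [Finset.mem_powersetCard]
      exact ⟨fun t ht => Finset.mem_erase.2
        ⟨fun hc => hv.2.2 (hc ▸ ht), mem_Fix.2 (hv.2.1 t ht)⟩, hv.1⟩
    · rintro ⟨u', _, him⟩
      obtain ⟨T', hT', heq2⟩ := Finset.mem_image.1 him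
      have h1 : u' = u := congrArg Prod.fst heq2
      have h2 : T' = T := congrArg Prod.snd heq2
      subst h1; subst h2
      rw [Finset.mem_powersetCard] at hT'
      exact ⟨hT'.2, fun t ht => mem_Fix.1 (Finset.mem_of_mem_erase (hT'.1 ht)),
        fun hc => (Finset.mem_erase.1 (hT'.1 hc)).1 rfl⟩
  rw [heq, Finset.card_biUnion]
  · have hcard : ∀ u : Fin N,
        ((Finset.powersetCard (k - 1) ((Fix s).erase (s.2 u))).image (fun T => (u, T))).card =
          Nat.choose ((Fix s).card - 1) (k - 1) := by
      intro u
      rw [Finset.card_image_of_injective _ (fun a b hab => congrArg Prod.snd hab)]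
      rw [Finset.card_powersetCard, Finset.card_erase_of_mem]
      exact mem_Fix.2 (good_idem hs u)
    rw [Finset.sum_congr rfl (fun u _ => hcard u), Finset.sum_const, Finset.card_univ,
      Fintype.card_fin, smul_eq_mul]
  · intro a _ b _ hab
    simp only [Finset.disjoint_left]
    intro x hx hx'
    obtain ⟨T1, _, h1⟩ := Finset.mem_image.1 hx
    obtain ⟨T2, _, h2⟩ := Finset.mem_image.1 hx'
    exact hab ((congrArg Prod.fst h1).trans (congrArg Prod.fst h2).symm)

noncomputable def runsFinset (k : ℕ) : ℕ → Finset (List (Mv N))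
  | 0 => {[]}
  | i + 1 => (runsFinset k i).biUnion
      (fun l => (movesFinset k (state l)).image (fun p => p :: l))

lemma mem_runsFinset {k : ℕ} : ∀ {i : ℕ} {l : List (Mv N)},
    l ∈ runsFinset k i ↔ l.length = i ∧ Valid k l := by
  intro i
  induction i with
  | zero =>
      intro l
      constructor
      · intro h
        rw [runsFinset, Finset.mem_singleton] at h
        subst h; exact ⟨rfl, trivial⟩
      · rintro ⟨h1, _⟩
        rw [runsFinset, Finset.mem_singleton]
        exact List.length_eq_zero_iff.1 h1
  | succ i ih =>
      intro l
      rw [runsFinset, Finset.mem_biUnion]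
      constructor
      · rintro ⟨l', hl', him⟩
        obtain ⟨p, hp, rfl⟩ := Finset.mem_image.1 him
        obtain ⟨h1, h2⟩ := ih.1 hl'
        exact ⟨by simp [h1], h2, mem_movesFinset.1 hp⟩
      · rintro ⟨h1, h2⟩
        match l with
        | p :: l' =>
          refine ⟨l', ih.2 ⟨by simpa using h1, h2.1⟩, Finset.mem_image.2
            ⟨p, mem_movesFinset.2 h2.2, rfl⟩⟩

lemma card_runsFinset {k : ℕ} (hk : 2 ≤ k) (i : ℕ) :
    (runsFinset k i : Finset (List (Mv N))).card =
      ∏ j ∈ Finset.range i, (N * Nat.choose (N - j * (k - 1) - 1) (k - 1)) := by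
  induction i with
  | zero => simp [runsFinset]
  | succ i ih =>
      rw [runsFinset, Finset.card_biUnion, Finset.prod_range_succ, ← ih]
      · have hcard : ∀ l ∈ runsFinset (N := N) k i,
            ((movesFinset k (state l)).image (fun p => p :: l)).card =
            N * Nat.choose (N - i * (k - 1) - 1) (k - 1) := by
          intro l hl
          obtain ⟨h1, h2⟩ := mem_runsFinset.1 hl
          rw [Finset.card_image_of_injective _ (cons_inj_left l),
            card_movesFinset (valid_good hk l h2)]
          have hfix := valid_fix_card hk l h2
          rw [h1] at hfix
          congr 2
          omega
        rw [Finset.sum_congr rfl hcard, Finset.sum_const, smul_eq_mul, mul_comm]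
      · intro a _ b _ hab
        simp only [Finset.disjoint_left]
        intro x hx hx'
        obtain ⟨p1, _, h1⟩ := Finset.mem_image.1 hx
        obtain ⟨p2, _, h2⟩ := Finset.mem_image.1 hx'
        exact hab ((congrArg List.tail h1).trans (congrArg List.tail h2).symm)


def edgeOf (p : Mv N) : Finset (Fin N) := insert p.1 p.2

def GoodPair (k : ℕ) (H : Finset (Finset (Fin N))) (S : Finset (Fin N)) : Prop :=
  (∀ e ∈ H, e.card = k) ∧ IsForest H ∧
    ∀ v : Fin N, ∃! r : Fin N, r ∈ S ∧ Reach H v r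

lemma forest_mono {H H' : Finset (Finset (Fin N))} (hsub : H' ⊆ H) (h : IsForest H) :
    IsForest H' := by
  rintro ⟨kk, v, E, hv, hE, hEH, hcond⟩
  exact h ⟨kk, v, E, hv, hE, fun i => hsub (hEH i), hcond⟩

lemma goodPair_of_good {k : ℕ} {s : St N} (hs : Good k s) : GoodPair k s.1 (Fix s) := by
  refine ⟨hs.1, hs.2.1, fun v => ⟨s.2 v, ⟨mem_Fix.2 (good_idem hs v), hs.2.2.2 v⟩, ?_⟩⟩
  rintro r ⟨hr, hR⟩
  have h1 := (hs.2.2.1 v r).1 hR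
  rw [h1, mem_Fix.1 hr]

lemma mark_unique {k : ℕ} {s s' : St N} (hs : Good k s) (hs' : Good k s')
    (h1 : s.1 = s'.1) (h2 : Fix s = Fix s') : s.2 = s'.2 := by
  funext v
  have ha : Reach s.1 v (s'.2 v) := by rw [h1]; exact hs'.2.2.2 v
  have hb : s.2 (s'.2 v) = s'.2 v := by
    have : s'.2 v ∈ Fix s := by rw [h2]; exact mem_Fix.2 (good_idem hs' v)
    exact mem_Fix.1 this
  rw [← hb]
  exact (hs.2.2.1 v (s'.2 v)).1 ha

lemma parent_unique {k : ℕ} {H : Finset (Finset (Fin N))} {S : Finset (Fin N)}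
    (hgp : GoodPair k H S) {e : Finset (Fin N)} (he : e ∈ H)
    {p₁ p₂ : Fin N} (h1 : p₁ ∈ e) (h2 : p₂ ∈ e)
    {r₁ r₂ : Fin N} (hr₁ : r₁ ∈ S) (hr₂ : r₂ ∈ S)
    (hR₁ : Reach (H.erase e) p₁ r₁) (hR₂ : Reach (H.erase e) p₂ r₂) : p₁ = p₂ := by
  by_contra hne
  by_cases hr : r₁ = r₂
  · subst hr
    exact hgp.2.1 (hasCycle_of_reach_erase he h1 h2 hne (hR₁.trans' hR₂.symm'))
  · have hsub : H.erase e ⊆ H := Finset.erase_subset e H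
    have hA : r₁ ∈ S ∧ Reach H p₁ r₁ := ⟨hr₁, reach_mono hsub hR₁⟩
    have hB : r₂ ∈ S ∧ Reach H p₁ r₂ :=
      ⟨hr₂, (reach_of_mem he h1 h2).trans' (reach_mono hsub hR₂)⟩
    exact hr ((hgp.2.2 p₁).unique hA hB)

lemma parent_exists {k : ℕ} (hk : 2 ≤ k) {H : Finset (Finset (Fin N))} {S : Finset (Fin N)}
    (hgp : GoodPair k H S) {e : Finset (Fin N)} (he : e ∈ H) :
    ∃ p ∈ e, ∃ r ∈ S, Reach (H.erase e) p r := by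
  have hcard := hgp.1 e he
  obtain ⟨v, hv⟩ := Finset.card_pos.1 (by omega : 0 < e.card)
  obtain ⟨r, ⟨hrS, hrR⟩, _⟩ := hgp.2.2 v
  rcases reach_erase_decomp (e := e) hrR.symm' with h | ⟨y, hy, h⟩
  · exact ⟨v, hv, r, hrS, h.symm'⟩
  · exact ⟨y, hy, r, hrS, h.symm'⟩

lemma goodPair_disjoint {k : ℕ} {H : Finset (Finset (Fin N))} {S : Finset (Fin N)}
    (hgp : GoodPair k H S) {e : Finset (Fin N)} (he : e ∈ H)
    {p r₀ : Fin N} (hp : p ∈ e) (hr₀ : r₀ ∈ S) (hpr : Reach (H.erase e) p r₀) :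
    Disjoint S (e.erase p) := by
  rw [Finset.disjoint_right]
  intro t ht hts
  obtain ⟨htp, hte⟩ := Finset.mem_erase.1 ht
  exact htp (parent_unique hgp he hte hp hts hr₀ Relation.ReflTransGen.refl hpr)

lemma goodPair_erase {k : ℕ} {H : Finset (Finset (Fin N))} {S : Finset (Fin N)}
    (hgp : GoodPair k H S) {e : Finset (Fin N)} (he : e ∈ H)
    {p r₀ : Fin N} (hp : p ∈ e) (hr₀ : r₀ ∈ S) (hpr : Reach (H.erase e) p r₀) :
    GoodPair k (H.erase e) (S ∪ e.erase p) := by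
  have hsub : H.erase e ⊆ H := Finset.erase_subset e H
  refine ⟨fun f hf => hgp.1 f (hsub hf), forest_mono hsub hgp.2.1, fun v => ?_⟩
  have hex : ∃ r, r ∈ S ∪ e.erase p ∧ Reach (H.erase e) v r := by
    obtain ⟨r, ⟨hrS, hrR⟩, _⟩ := hgp.2.2 v
    rcases reach_erase_decomp (e := e) hrR with h | ⟨y, hy, h⟩
    · exact ⟨r, Finset.mem_union_left _ hrS, h⟩
    · by_cases hyp : y = p
      · subst hyp
        exact ⟨r₀, Finset.mem_union_left _ hr₀, h.trans' hpr⟩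
      · exact ⟨y, Finset.mem_union_right _ (Finset.mem_erase.2 ⟨hyp, hy⟩), h⟩
  obtain ⟨r, hr1, hr2⟩ := hex
  refine ⟨r, ⟨hr1, hr2⟩, ?_⟩
  rintro r' ⟨hr1', hr2'⟩
  -- uniqueness
  by_contra hne
  have hconn : Reach (H.erase e) r' r := hr2'.symm'.trans' hr2
  rcases Finset.mem_union.1 hr1 with hA | hA <;> rcases Finset.mem_union.1 hr1' with hB | hB
  · exact hne ((hgp.2.2 v).unique ⟨hB, reach_mono hsub hr2'⟩ ⟨hA, reach_mono hsub hr2⟩)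
  · obtain ⟨hBp, hBe⟩ := Finset.mem_erase.1 hB
    exact hBp (parent_unique hgp he hBe hp hA hr₀ hconn hpr)
  · obtain ⟨hAp, hAe⟩ := Finset.mem_erase.1 hA
    exact hAp (parent_unique hgp he hAe hp hB hr₀ hconn.symm' hpr)
  · exact hgp.2.1 (hasCycle_of_reach_erase he (Finset.mem_erase.1 hB).2
      (Finset.mem_erase.1 hA).2 hne hconn)

lemma state_edges : ∀ l : List (Mv N), (state l).1 = (l.map edgeOf).toFinset
  | [] => rfl
  | p :: l => by
      show insert (edgeOf p) (state l).1 = _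
      rw [state_edges l]
      simp [edgeOf]


lemma reach_empty {v w : Fin N} (h : Reach (∅ : Finset (Finset (Fin N))) v w) : v = w := by
  induction h with
  | refl => rfl
  | tail _ hbc ih => obtain ⟨e, he, _⟩ := hbc; exact absurd he (Finset.notMem_empty e)

lemma goodPair_empty_univ {k : ℕ} {S : Finset (Fin N)}
    (hgp : GoodPair k (∅ : Finset (Finset (Fin N))) S) : S = Finset.univ := by
  ext v
  simp only [Finset.mem_univ, iff_true]
  obtain ⟨r, ⟨hrS, hrR⟩, _⟩ := hgp.2.2 v
  rwa [reach_empty hrR]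

lemma run_exists {k : ℕ} (hk : 2 ≤ k) :
    ∀ (L : List (Finset (Fin N))) (S : Finset (Fin N)), L.Nodup →
      GoodPair k L.toFinset S →
      ∃ l : List (Mv N), Valid k l ∧ (state l).1 = L.toFinset ∧
        Fix (state l) = S ∧ l.map edgeOf = L := by
  intro L
  induction L with
  | nil =>
      intro S _ hgp
      refine ⟨[], trivial, by simp [state], ?_, rfl⟩
      have h1 : S = Finset.univ := goodPair_empty_univ (by simpa using hgp)
      rw [h1]
      show Finset.univ.filter (fun v => (id : Fin N → Fin N) v = v) = Finset.univ
      simp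
  | cons e L ih =>
      intro S hnd hgp
      have heL : e ∉ L.toFinset := by
        simp only [List.toFinset_cons] at *
        have := hnd
        rw [List.nodup_cons] at this
        simpa using this.1
      have hH : (e :: L).toFinset = insert e L.toFinset := by simp
      have heH : e ∈ (e :: L).toFinset := by simp
      obtain ⟨p, hp, r₀, hr₀, hpr⟩ := parent_exists hk hgp heH
      have herase : (e :: L).toFinset.erase e = L.toFinset := by
        rw [hH]; exact Finset.erase_insert heL
      have hgp' : GoodPair k L.toFinset (S ∪ e.erase p) := by
        rw [← herase]; exact goodPair_erase hgp heH hp hr₀ hpr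
      have hdisj : Disjoint S (e.erase p) := goodPair_disjoint hgp heH hp hr₀ hpr
      obtain ⟨l, hval, hst, hfix, hmap⟩ := ih (S ∪ e.erase p) ((List.nodup_cons.1 hnd).2) hgp'
      have hgood := valid_good hk l hval
      have hmove : ValidMove k (state l) (p, e.erase p) := by
        refine ⟨?_, ?_, ?_⟩
        · rw [Finset.card_erase_of_mem hp, hgp.1 e heH]
        · intro t ht
          have h1 : t ∈ Fix (state l) := by
            rw [hfix]; exact Finset.mem_union_right _ ht
          exact mem_Fix.1 h1
        · have hmark : (state l).2 p = (state l).2 r₀ := by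
            apply (hgood.2.2.1 p r₀).1
            rw [hst, ← herase]
            exact hpr
          have hr₀fix : (state l).2 r₀ = r₀ := by
            apply mem_Fix.1
            rw [hfix]
            exact Finset.mem_union_left _ hr₀
          rw [hmark, hr₀fix]
          exact fun hc => (Finset.disjoint_left.1 hdisj hr₀) hc
      refine ⟨(p, e.erase p) :: l, ⟨hval, hmove⟩, ?_, ?_, ?_⟩
      · show insert (insert p (e.erase p)) (state l).1 = _
        rw [hst, hH, Finset.insert_erase hp]
      · show Fix (step (state l) (p, e.erase p)) = S
        rw [step_fix hgood hmove, hfix]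
        rw [Finset.union_sdiff_cancel_right hdisj]
      · show edgeOf (p, e.erase p) :: l.map edgeOf = e :: L
        rw [hmap]
        show insert p (e.erase p) :: L = e :: L
        rw [Finset.insert_erase hp]

lemma run_unique {k : ℕ} (hk : 2 ≤ k) :
    ∀ (l l' : List (Mv N)), Valid k l → Valid k l' →
      Fix (state l) = Fix (state l') → l.map edgeOf = l'.map edgeOf → l = l' := by
  intro l
  induction l with
  | nil =>
      intro l' _ _ _ hmap
      cases l' with
      | nil => rfl
      | cons p' l'' => simp at hmap
  | cons p l ih =>
      intro l' hv hv' hfix hmap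
      match l' with
      | [] => simp at hmap
      | p' :: l'' =>
        simp only [List.map_cons, List.cons.injEq] at hmap
        obtain ⟨hedge, hmapt⟩ := hmap
        have hgood := valid_good hk l hv.1
        have hgood' := valid_good hk l'' hv'.1
        have hsgood := step_good hk hgood hv.2
        have hsgood' := step_good hk hgood' hv'.2
        have hsgood2 : Good k (state (p :: l)) := hsgood
        have hsgood2' : Good k (state (p' :: l'')) := hsgood'
        have hstate1 : (state (p :: l)).1 = (state (p' :: l'')).1 := by
          rw [state_edges, state_edges]
          simp only [List.map_cons, hedge, hmapt]
        -- parent characterization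
        have he1 : edgeOf p ∈ (state (p :: l)).1 := Finset.mem_insert_self _ _
        have herase1 : (state (p :: l)).1.erase (edgeOf p) = (state l).1 :=
          Finset.erase_insert (step_edge_not_mem hk hgood hv.2)
        have herase2 : (state (p' :: l'')).1.erase (edgeOf p') = (state l'').1 :=
          Finset.erase_insert (step_edge_not_mem hk hgood' hv'.2)
        have hfix1 : Fix (state (p :: l)) = Fix (state l) \ p.2 := step_fix hgood hv.2
        have hfix2 : Fix (state (p' :: l'')) = Fix (state l'') \ p'.2 := step_fix hgood' hv'.2
        have hrp : (state l).2 p.1 ∈ Fix (state (p :: l)) := by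
          rw [hfix1, Finset.mem_sdiff]
          exact ⟨mem_Fix.2 (good_idem hgood p.1), hv.2.2.2⟩
        have hrp' : (state l'').2 p'.1 ∈ Fix (state (p' :: l'')) := by
          rw [hfix2, Finset.mem_sdiff]
          exact ⟨mem_Fix.2 (good_idem hgood' p'.1), hv'.2.2.2⟩
        have hR1 : Reach ((state (p :: l)).1.erase (edgeOf p)) p.1 ((state l).2 p.1) := by
          rw [herase1]; exact hgood.2.2.2 p.1
        have hR2 : Reach ((state (p :: l)).1.erase (edgeOf p)) p'.1 ((state l'').2 p'.1) := by
          rw [show (state (p :: l)).1.erase (edgeOf p) = (state l'').1 by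
            rw [hedge, hstate1]; exact herase2]
          exact hgood'.2.2.2 p'.1
        have hpe : p.1 ∈ edgeOf p := Finset.mem_insert_self _ _
        have hpe' : p'.1 ∈ edgeOf p := hedge ▸ Finset.mem_insert_self _ _
        have hrp'' : (state l'').2 p'.1 ∈ Fix (state (p :: l)) := by
          rw [hfix]; exact hrp'
        have hp1 : p.1 = p'.1 :=
          parent_unique (goodPair_of_good hsgood2) he1 hpe hpe'
            hrp hrp'' hR1 hR2
        have hnm : p.1 ∉ p.2 := validMove_parent_not_mem hgood hv.2
        have hnm' : p'.1 ∉ p'.2 := validMove_parent_not_mem hgood' hv'.2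
        have hp2 : p.2 = p'.2 := by
          have e1 : (edgeOf p).erase p.1 = p.2 := Finset.erase_insert hnm
          have e2 : (edgeOf p').erase p'.1 = p'.2 := Finset.erase_insert hnm'
          rw [← e1, ← e2, hedge, hp1]
        have hpp : p = p' := Prod.ext hp1 hp2
        have hsub1 : p.2 ⊆ Fix (state l) := fun t ht => mem_Fix.2 (hv.2.2.1 t ht)
        have hsub2 : p'.2 ⊆ Fix (state l'') := fun t ht => mem_Fix.2 (hv'.2.2.1 t ht)
        have hfixt : Fix (state l) = Fix (state l'') := by
          have q1 : Fix (state l) = Fix (state (p :: l)) ∪ p.2 := by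
            rw [hfix1, Finset.sdiff_union_of_subset hsub1]
          have q2 : Fix (state l'') = Fix (state (p' :: l'')) ∪ p'.2 := by
            rw [hfix2, Finset.sdiff_union_of_subset hsub2]
          rw [q1, q2, hfix, hp2]
        rw [hpp, ih l'' hv.1 hv'.1 hfixt hmapt]

lemma valid_nodup {k : ℕ} (hk : 2 ≤ k) :
    ∀ l : List (Mv N), Valid k l → (l.map edgeOf).Nodup
  | [], _ => List.nodup_nil
  | p :: l, h => by
      rw [List.map_cons, List.nodup_cons]
      refine ⟨?_, valid_nodup hk l h.1⟩
      intro hc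
      have h1 : edgeOf p ∈ (state l).1 := by
        rw [state_edges]; exact List.mem_toFinset.2 hc
      exact step_edge_not_mem hk (valid_good hk l h.1) h.2 h1

lemma goodPair_card_eq {k : ℕ} (hk : 2 ≤ k) {H : Finset (Finset (Fin N))}
    {S : Finset (Fin N)} (hgp : GoodPair k H S) : S.card + H.card * (k - 1) = N := by
  obtain ⟨l, hv, hst, hfix, hmap⟩ := run_exists hk H.toList S (Finset.nodup_toList H)
    (by rw [Finset.toList_toFinset]; exact hgp)
  have h1 := valid_fix_card hk l hv
  have h2 : l.length = H.card := by
    have h3 := congrArg List.length hmap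
    rwa [List.length_map, Finset.length_toList] at h3
  rwa [hfix, h2] at h1

noncomputable def pairsFinset (N k i : ℕ) :
    Finset (Finset (Finset (Fin N)) × Finset (Fin N)) :=
  Finset.univ.filter (fun q => q.1.card = i ∧ GoodPair k q.1 q.2)

lemma card_runs_eq {k : ℕ} (hk : 2 ≤ k) (i : ℕ) :
    (runsFinset (N := N) k i).card = (pairsFinset N k i).card * i.factorial := by
  have hmap : ∀ l ∈ runsFinset (N := N) k i,
      ((state l).1, Fix (state l)) ∈ pairsFinset N k i := by
    intro l hl
    obtain ⟨hlen, hval⟩ := mem_runsFinset.1 hl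
    rw [pairsFinset, Finset.mem_filter]
    exact ⟨Finset.mem_univ _, by rw [valid_card hk l hval, hlen],
      goodPair_of_good (valid_good hk l hval)⟩
  rw [Finset.card_eq_sum_card_fiberwise hmap]
  have hfib : ∀ q ∈ pairsFinset N k i,
      ((runsFinset (N := N) k i).filter
        (fun a => ((state a).1, Fix (state a)) = q)).card = i.factorial := ?_
  · rw [Finset.sum_congr rfl hfib, Finset.sum_const, smul_eq_mul]
  intro q hq
  rw [pairsFinset, Finset.mem_filter] at hq
  obtain ⟨-, hqcard, hqgp⟩ := hq
  -- bijection between the fiber and permutations of q.1.toList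
  have hcardt : (q.1.toList.permutations.toFinset : Finset (List (Finset (Fin N)))).card =
      i.factorial := by
    rw [List.card_toFinset, List.dedup_eq_self.2 (List.nodup_permutations _ (Finset.nodup_toList q.1)),
      List.length_permutations, Finset.length_toList, hqcard]
  rw [← hcardt]
  apply Finset.card_bij (fun l _ => l.map edgeOf)
  · -- maps into
    intro l hl
    rw [Finset.mem_filter] at hl
    obtain ⟨hl1, hl2⟩ := hl
    obtain ⟨hlen, hval⟩ := mem_runsFinset.1 hl1
    rw [List.mem_toFinset, List.mem_permutations]
    apply List.perm_of_nodup_nodup_toFinset_eq (valid_nodup hk l hval) (Finset.nodup_toList q.1)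
    rw [Finset.toList_toFinset, ← state_edges l]
    exact congrArg Prod.fst hl2
  · -- injective
    intro l1 hl1 l2 hl2 heq
    rw [Finset.mem_filter] at hl1 hl2
    exact run_unique hk l1 l2 (mem_runsFinset.1 hl1.1).2 (mem_runsFinset.1 hl2.1).2
      ((congrArg Prod.snd hl1.2).trans (congrArg Prod.snd hl2.2).symm) heq
  · -- surjective
    intro L hL
    rw [List.mem_toFinset, List.mem_permutations] at hL
    have hnodup : L.Nodup := hL.symm.nodup (Finset.nodup_toList q.1)
    have htofin : L.toFinset = q.1 := by
      rw [← Finset.toList_toFinset q.1]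
      exact List.toFinset_eq_of_perm _ _ hL
    obtain ⟨l, hval, hst, hfix, hmap'⟩ := run_exists hk L q.2 hnodup (htofin ▸ hqgp)
    refine ⟨l, Finset.mem_filter.2 ⟨mem_runsFinset.2 ⟨?_, hval⟩, ?_⟩, hmap'⟩
    · have h3 := congrArg List.length hmap'
      rw [List.length_map] at h3
      rw [h3, hL.length_eq, Finset.length_toList, hqcard]
    · rw [hst, hfix, htofin]

noncomputable def forestsFinset (N k : ℕ) (S : Finset (Fin N)) :
    Finset (Finset (Finset (Fin N))) :=
  Finset.univ.filter (fun H => GoodPair k H S)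

lemma pairs_decomp {k i n : ℕ} (hk : 2 ≤ k) (hni : n + i * (k - 1) = N) :
    (pairsFinset N k i).card =
      ∑ S ∈ Finset.powersetCard n (Finset.univ : Finset (Fin N)),
        (forestsFinset N k S).card := by
  have heq : pairsFinset N k i =
      (Finset.powersetCard n (Finset.univ : Finset (Fin N))).biUnion
        (fun S => (forestsFinset N k S).image (fun H => (H, S))) := by
    ext ⟨H, S⟩
    rw [pairsFinset, Finset.mem_filter, Finset.mem_biUnion]
    dsimp only
    constructor
    · rintro ⟨-, hcard, hgp⟩
      have hc := goodPair_card_eq hk hgp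
      rw [hcard] at hc
      refine ⟨S, Finset.mem_powersetCard.2 ⟨Finset.subset_univ S, by omega⟩,
        Finset.mem_image.2 ⟨H, ?_, rfl⟩⟩
      rw [forestsFinset, Finset.mem_filter]
      exact ⟨Finset.mem_univ _, hgp⟩
    · rintro ⟨S', hS', him⟩
      obtain ⟨H', hH', heq2⟩ := Finset.mem_image.1 him
      have h1 : H' = H := congrArg Prod.fst heq2
      have h2 : S' = S := congrArg Prod.snd heq2
      rw [forestsFinset, Finset.mem_filter, h1, h2] at hH'
      rw [h2] at hS'
      have hc := goodPair_card_eq hk hH'.2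
      have hcS := (Finset.mem_powersetCard.1 hS').2
      refine ⟨Finset.mem_univ _, ?_, hH'.2⟩
      rw [hcS] at hc
      have h3 : H.card * (k - 1) = i * (k - 1) := by omega
      exact Nat.eq_of_mul_eq_mul_right (by omega) h3
    -- end ext
  rw [heq, Finset.card_biUnion]
  · apply Finset.sum_congr rfl
    intro S _
    exact Finset.card_image_of_injective _ (fun a b hab => congrArg Prod.fst hab)
  · intro a _ b _ hab
    simp only [Finset.disjoint_left]
    intro x hx hx'
    obtain ⟨H1, _, h1⟩ := Finset.mem_image.1 hx
    obtain ⟨H2, _, h2⟩ := Finset.mem_image.1 hx'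
    exact hab ((congrArg Prod.snd h1).trans (congrArg Prod.snd h2).symm)


noncomputable def mapH (sigma : Equiv.Perm (Fin N)) (H : Finset (Finset (Fin N))) :
    Finset (Finset (Fin N)) :=
  H.image (fun e => e.map sigma.toEmbedding)

lemma mapH_mapH (sigma : Equiv.Perm (Fin N)) (H : Finset (Finset (Fin N))) :
    mapH sigma.symm (mapH sigma H) = H := by
  rw [mapH, mapH, Finset.image_image]
  have h1 : ∀ e : Finset (Fin N),
      (e.map sigma.toEmbedding).map sigma.symm.toEmbedding = e := by
    intro e
    ext x
    simp [Finset.mem_map]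
  calc H.image (fun e => (e.map sigma.toEmbedding).map sigma.symm.toEmbedding)
      = H.image id := Finset.image_congr (fun e _ => h1 e)
    _ = H := Finset.image_id

lemma adj_mapH (sigma : Equiv.Perm (Fin N)) {H : Finset (Finset (Fin N))} {u v : Fin N}
    (h : adj H u v) : adj (mapH sigma H) (sigma u) (sigma v) := by
  obtain ⟨e, he, hu, hv⟩ := h
  exact ⟨e.map sigma.toEmbedding, Finset.mem_image_of_mem _ he,
    Finset.mem_map_of_mem _ hu, Finset.mem_map_of_mem _ hv⟩

lemma reach_mapH (sigma : Equiv.Perm (Fin N)) {H : Finset (Finset (Fin N))} {u v : Fin N}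
    (h : Reach H u v) : Reach (mapH sigma H) (sigma u) (sigma v) := by
  induction h with
  | refl => exact Relation.ReflTransGen.refl
  | tail _ hbc ih => exact Relation.ReflTransGen.tail ih (adj_mapH sigma hbc)

lemma hasCycle_mapH (sigma : Equiv.Perm (Fin N)) {H : Finset (Finset (Fin N))}
    (h : HasCycle H) : HasCycle (mapH sigma H) := by
  obtain ⟨kk, v, E, hv, hE, hEH, hcond⟩ := h
  refine ⟨kk, fun i => sigma (v i), fun i => (E i).map sigma.toEmbedding,
    fun a b hab => hv (sigma.injective hab),
    fun a b hab => hE (Finset.map_injective _ hab),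
    fun i => Finset.mem_image_of_mem _ (hEH i),
    fun i => ⟨Finset.mem_map_of_mem _ (hcond i).1, Finset.mem_map_of_mem _ (hcond i).2⟩⟩

lemma goodPair_mapH {k : ℕ} (sigma : Equiv.Perm (Fin N)) {H : Finset (Finset (Fin N))}
    {S : Finset (Fin N)} (hgp : GoodPair k H S) :
    GoodPair k (mapH sigma H) (S.image sigma) := by
  refine ⟨?_, ?_, ?_⟩
  · intro e' he'
    obtain ⟨e, he, rfl⟩ := Finset.mem_image.1 he'
    rw [Finset.card_map]
    exact hgp.1 e he
  · intro hc
    have h2 := hasCycle_mapH sigma.symm hc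
    rw [mapH_mapH] at h2
    exact hgp.2.1 h2
  · intro v
    obtain ⟨r, ⟨hrS, hrR⟩, hru⟩ := hgp.2.2 (sigma.symm v)
    refine ⟨sigma r, ⟨Finset.mem_image_of_mem _ hrS, ?_⟩, ?_⟩
    · have h1 := reach_mapH sigma hrR
      rwa [Equiv.apply_symm_apply] at h1
    · rintro r' ⟨hr'S, hr'R⟩
      obtain ⟨r₀, hr₀S, rfl⟩ := Finset.mem_image.1 hr'S
      have h1 := reach_mapH sigma.symm hr'R
      rw [Equiv.symm_apply_apply] at h1
      have h2 : Reach H (sigma.symm v) r₀ := by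
        have h3 := mapH_mapH sigma H
        rwa [h3] at h1
      rw [hru r₀ ⟨hr₀S, h2⟩]

lemma forests_card_eq {k : ℕ} {S S' : Finset (Fin N)} (hcard : S.card = S'.card) :
    (forestsFinset N k S).card = (forestsFinset N k S').card := by
  have e : (↥S : Type) ≃ ↥S' :=
    Fintype.equivOfCardEq (by rwa [Fintype.card_coe, Fintype.card_coe])
  set sigma : Equiv.Perm (Fin N) := e.extendSubtype with hsigma
  have himg : S.image sigma = S' := by
    apply Finset.eq_of_subset_of_card_le
    · intro x hx
      obtain ⟨y, hy, rfl⟩ := Finset.mem_image.1 hx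
      exact e.extendSubtype_mem y hy
    · rw [Finset.card_image_of_injective _ sigma.injective, hcard]
  have hsub : ∀ H ∈ forestsFinset N k S, mapH sigma H ∈ forestsFinset N k S' := by
    intro H hH
    rw [forestsFinset, Finset.mem_filter] at hH ⊢
    exact ⟨Finset.mem_univ _, himg ▸ goodPair_mapH sigma hH.2⟩
  apply Finset.card_bij (fun H _ => mapH sigma H) hsub
  · intro H1 h1 H2 h2 heq
    have := congrArg (mapH sigma.symm) heq
    rwa [mapH_mapH, mapH_mapH] at this
  · intro H' hH'
    have hmm : mapH sigma (mapH sigma.symm H') = H' := by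
      have h0 := mapH_mapH sigma.symm H'
      rwa [Equiv.symm_symm] at h0
    refine ⟨mapH sigma.symm H', ?_, hmm⟩
    rw [forestsFinset, Finset.mem_filter] at hH' ⊢
    refine ⟨Finset.mem_univ _, ?_⟩
    have h1 := goodPair_mapH sigma.symm hH'.2
    have h2 : S'.image sigma.symm = S := by
      rw [← himg, Finset.image_image]
      calc S.image (fun x => sigma.symm (sigma x)) = S.image id :=
            Finset.image_congr (fun x _ => sigma.symm_apply_apply x)
        _ = S := Finset.image_id
    rwa [h2] at h1


lemma prod_choose {k : ℕ} (hk : 2 ≤ k) {n : ℕ} (hn1 : 1 ≤ n) :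
    ∀ (m NN : ℕ), n + m * (k - 1) = NN →
      (∏ j ∈ Finset.range m, Nat.choose (NN - j * (k - 1) - 1) (k - 1)) *
          ((k - 1).factorial) ^ m * (n - 1).factorial = (NN - 1).factorial
  | 0, NN, h => by
      simp only [Finset.range_zero, Finset.prod_empty, one_mul, pow_zero]
      congr 1
      omega
  | m + 1, NN, h => by
      have hk1 : 1 ≤ k - 1 := by omega
      have hN' : n + m * (k - 1) = NN - (k - 1) := by
        have : (m + 1) * (k - 1) = m * (k - 1) + (k - 1) := by ring
        omega
      have ih := prod_choose hk hn1 m (NN - (k - 1)) hN'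
      have hNN : k ≤ NN := by
        have : (m + 1) * (k - 1) = m * (k - 1) + (k - 1) := by ring
        omega
      rw [Finset.prod_range_succ']
      have hshift : ∀ j, Nat.choose (NN - (j + 1) * (k - 1) - 1) (k - 1)
          = Nat.choose ((NN - (k - 1)) - j * (k - 1) - 1) (k - 1) := by
        intro j
        congr 1
        have : (j + 1) * (k - 1) = j * (k - 1) + (k - 1) := by ring
        omega
      rw [Finset.prod_congr rfl (fun j _ => hshift j)]
      have hfact : Nat.choose (NN - 0 * (k - 1) - 1) (k - 1) * (k - 1).factorial *
          (NN - k).factorial = (NN - 1).factorial := by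
        have h1 : k - 1 ≤ NN - 1 := by omega
        have h2 := Nat.choose_mul_factorial_mul_factorial h1
        have h3 : NN - 1 - (k - 1) = NN - k := by omega
        rw [h3] at h2
        have h4 : NN - 0 * (k - 1) - 1 = NN - 1 := by omega
        rw [h4]
        exact h2
      have hNk : NN - (k - 1) - 1 = NN - k := by omega
      rw [hNk] at ih
      set Q := ∏ j ∈ Finset.range m, Nat.choose ((NN - (k - 1)) - j * (k - 1) - 1) (k - 1)
      set f0 := Nat.choose (NN - 0 * (k - 1) - 1) (k - 1)
      calc Q * f0 * (k - 1).factorial ^ (m + 1) * (n - 1).factorial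
          = (Q * (k - 1).factorial ^ m * (n - 1).factorial) * (f0 * (k - 1).factorial) := by
            rw [pow_succ]; ring
        _ = (NN - k).factorial * (f0 * (k - 1).factorial) := by rw [ih]
        _ = f0 * (k - 1).factorial * (NN - k).factorial := by ring
        _ = (NN - 1).factorial := hfact

lemma num_eq (N n k : ℕ) :
    numRootedForests N n k =
      (forestsFinset N k (Finset.univ.filter (fun v : Fin N => (v : ℕ) < n))).card := by
  rw [numRootedForests, ← Set.ncard_coe_finset]
  congr 1
  ext H
  simp only [Set.mem_setOf_eq, forestsFinset, Finset.coe_filter, Finset.mem_univ, true_and]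
  unfold GoodPair IsRootedForest
  simp only [Finset.mem_filter, Finset.mem_univ, true_and, Set.mem_setOf_eq]

lemma card_S0 {N n : ℕ} (hn : n ≤ N) :
    (Finset.univ.filter (fun v : Fin N => (v : ℕ) < n)).card = n := by
  have h1 : Finset.univ.filter (fun v : Fin N => (v : ℕ) < n) =
      (Finset.range n).attachFin
        (fun m hm => lt_of_lt_of_le (Finset.mem_range.1 hm) hn) := by
    ext v
    rw [Finset.mem_filter, Finset.mem_attachFin, Finset.mem_range]
    simp
  rw [h1, Finset.card_attachFin, Finset.card_range]


/-- The exact count of `k`-uniform rooted forests with vertex set `[N]` and root set `[n]`: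
`n·(N−n)!·N^{m̃−1}/(m̃!·((k−1)!)^{m̃})` when `m̃ = (N−n)/(k−1)` is a nonnegative integer,
and `0` otherwise. -/
theorem stmt1 (k N n : ℕ) (hk : 2 ≤ k) (hN : 1 ≤ N) (hn : n ≤ N) :
    if (k - 1) ∣ (N - n) then
      (numRootedForests N n k : ℝ) =
        n * (Nat.factorial (N - n)) *
            (N : ℝ) ^ ((((N - n) / (k - 1) : ℕ) : ℤ) - 1) /
          ((Nat.factorial ((N - n) / (k - 1)) : ℝ) *
            (Nat.factorial (k - 1) : ℝ) ^ ((N - n) / (k - 1)))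
    else numRootedForests N n k = 0 := by
  have hS0card := card_S0 (N := N) (n := n) hn
  have hnum := num_eq N n k
  by_cases hdiv : (k - 1) ∣ (N - n)
  · rw [if_pos hdiv]
    have hmn : n + (N - n) / (k - 1) * (k - 1) = N := by
      have h1 := Nat.div_mul_cancel hdiv
      omega
    set m := (N - n) / (k - 1) with hmdef
    by_cases hn0 : n = 0
    · subst hn0
      have hF : forestsFinset N k (Finset.univ.filter (fun v : Fin N => (v : ℕ) < 0)) = ∅ := by
        apply Finset.eq_empty_of_forall_notMem
        intro H hH
        rw [forestsFinset, Finset.mem_filter] at hH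
        obtain ⟨r, ⟨hrS, _⟩, _⟩ := hH.2.2.2 ⟨0, by omega⟩
        rw [Finset.mem_filter] at hrS
        omega
      rw [hnum, hF]
      simp
    · have hn1 : 1 ≤ n := by omega
      set S0 := Finset.univ.filter (fun v : Fin N => (v : ℕ) < n) with hS0def
      set F := (forestsFinset N k S0).card with hFdef
      set P := ∏ j ∈ Finset.range m, Nat.choose (N - j * (k - 1) - 1) (k - 1) with hPdef
      have h3 : ∑ S' ∈ Finset.powersetCard n (Finset.univ : Finset (Fin N)),
          (forestsFinset N k S').card = Nat.choose N n * F := by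
        rw [Finset.sum_congr rfl (fun S' hS' =>
          forests_card_eq (((Finset.mem_powersetCard.1 hS').2).trans hS0card.symm))]
        rw [Finset.sum_const, smul_eq_mul, Finset.card_powersetCard, Finset.card_univ,
          Fintype.card_fin]
      have h1 : (∏ j ∈ Finset.range m, (N * Nat.choose (N - j * (k - 1) - 1) (k - 1)))
          = Nat.choose N n * F * m.factorial := by
        rw [← card_runsFinset hk m, card_runs_eq hk m, pairs_decomp hk hmn, h3]
      have hA : Nat.choose N n * F * m.factorial = N ^ m * P := by
        rw [← h1, Finset.prod_mul_distrib, Finset.prod_const, Finset.card_range]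
      have hB := prod_choose hk hn1 m N hmn
      have hgrand : Nat.choose N n * F * m.factorial * ((k - 1).factorial) ^ m *
          (n - 1).factorial = N ^ m * (N - 1).factorial := by
        calc Nat.choose N n * F * m.factorial * ((k - 1).factorial) ^ m * (n - 1).factorial
            = (Nat.choose N n * F * m.factorial) *
              (((k - 1).factorial) ^ m * (n - 1).factorial) := by ring
          _ = (N ^ m * P) * (((k - 1).factorial) ^ m * (n - 1).factorial) := by rw [hA]
          _ = N ^ m * (P * ((k - 1).factorial) ^ m * (n - 1).factorial) := by ring
          _ = N ^ m * (N - 1).factorial := by rw [hB]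
      -- move to the reals
      have hgrandR : (Nat.choose N n : ℝ) * F * m.factorial * ((k - 1).factorial : ℝ) ^ m *
          ((n - 1).factorial : ℝ) = (N : ℝ) ^ m * ((N - 1).factorial : ℝ) := by
        exact_mod_cast congrArg (Nat.cast (R := ℝ)) hgrand
      have hNz : (N : ℝ) ≠ 0 := Nat.cast_ne_zero.2 (by omega)
      have hchoose2 : (Nat.choose N n : ℝ) * ((n - 1).factorial : ℝ) * n *
          ((N - n).factorial : ℝ) = (N.factorial : ℝ) := by
        have h5 : n * (n - 1).factorial = n.factorial := Nat.mul_factorial_pred (by omega)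
        have h6 : Nat.choose N n * (n - 1).factorial * n * (N - n).factorial = N.factorial := by
          calc Nat.choose N n * (n - 1).factorial * n * (N - n).factorial
              = Nat.choose N n * (n * (n - 1).factorial) * (N - n).factorial := by ring
            _ = Nat.choose N n * n.factorial * (N - n).factorial := by rw [h5]
            _ = N.factorial := Nat.choose_mul_factorial_mul_factorial hn
        exact_mod_cast congrArg (Nat.cast (R := ℝ)) h6
      have hstar2 : (F : ℝ) * m.factorial * ((k - 1).factorial : ℝ) ^ m * (N.factorial : ℝ)
          = (N : ℝ) ^ m * ((N - 1).factorial : ℝ) * n * ((N - n).factorial : ℝ) := by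
        linear_combination ((n : ℝ) * ((N - n).factorial : ℝ)) * hgrandR -
          ((F : ℝ) * m.factorial * ((k - 1).factorial : ℝ) ^ m) * hchoose2
      have hNfacR : (N.factorial : ℝ) = N * ((N - 1).factorial : ℝ) := by
        exact_mod_cast congrArg (Nat.cast (R := ℝ)) (Nat.mul_factorial_pred (by omega : N ≠ 0)).symm
      have hfacne : ((N - 1).factorial : ℝ) ≠ 0 := Nat.cast_ne_zero.2 (Nat.factorial_ne_zero _)
      have hstar : (F : ℝ) * (m.factorial * ((k - 1).factorial : ℝ) ^ m) * N
          = n * ((N - n).factorial : ℝ) * (N : ℝ) ^ m := by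
        apply mul_right_cancel₀ hfacne
        rw [hNfacR] at hstar2
        linear_combination hstar2
      have hzp : (N : ℝ) ^ ((m : ℤ) - 1) = (N : ℝ) ^ m / N := by
        rw [zpow_sub₀ hNz, zpow_natCast, zpow_one]
      rw [hnum, hzp]
      have hden : (m.factorial : ℝ) * ((k - 1).factorial : ℝ) ^ m ≠ 0 := by positivity
      rw [eq_div_iff hden, ← mul_div_assoc, eq_div_iff hNz]
      linear_combination hstar
  · rw [if_neg hdiv, hnum, Finset.card_eq_zero]
    apply Finset.eq_empty_of_forall_notMem
    intro H hH
    rw [forestsFinset, Finset.mem_filter] at hH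
    have h7 := goodPair_card_eq hk hH.2
    rw [hS0card] at h7
    have h8 : N - n = H.card * (k - 1) := by omega
    exact hdiv (h8 ▸ dvd_mul_left (k - 1) H.card)


end Stmt1
end

section
/- For every real α > 3/2, the equation λ·f_1(λ)·g_2(λ)/f_2(2λ) = α has exactly one positive solution λ*_α. Moreover, for every ε > 0 there exists ε' > 0 such that for all α, β ∈ (3/2, 3/2 + ε) one has |λ*_α − λ*_β| ≤ ε'·|α − β|. -/
open Filter Topology

namespace Stmt5

/-- `f_k(x) = e^x − Σ_{i<k} x^i/i!`. -/
noncomputable def fpo (k : ℕ) (x : ℝ) : ℝ :=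
  Real.exp x - ∑ i ∈ Finset.range k, x ^ i / (Nat.factorial i : ℝ)

/-- `g_k(x) = e^x + k`. -/
noncomputable def gpo (k : ℕ) (x : ℝ) : ℝ := Real.exp x + k


noncomputable def pe (a b c : ℝ) (n : ℕ) (y : ℝ) : ℝ :=
  (a + b * y + c * y ^ 2) * Real.exp y ^ n

lemma hasDerivAt_pe (a b c : ℝ) (n : ℕ) (x : ℝ) :
    HasDerivAt (pe a b c n) (pe (b + n * a) (2 * c + n * b) (n * c) n x) x := by
  have hp : HasDerivAt (fun y : ℝ => a + b * y + c * y ^ 2) (b + 2 * c * x) x := by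
    have h1 : HasDerivAt (fun y : ℝ => a + b * y) b x := by
      simpa using ((hasDerivAt_id x).const_mul b).const_add a
    have h2 := (hasDerivAt_pow 2 x).const_mul c
    refine (h1.add h2).congr_deriv ?_
    push_cast
    ring
  have he := (Real.hasDerivAt_exp x).pow n
  have h := hp.mul he
  unfold pe
  refine (h).congr_deriv ?_
  cases n with
  | zero => simp
  | succ m =>
    simp only [pow_succ, Nat.add_sub_cancel, Pi.mul_apply, Pi.pow_apply]
    push_cast
    ring

noncomputable def W0 (y : ℝ) : ℝ :=
  pe 1 0 0 4 y + pe 1 (-1) 0 3 y + pe (-3) 2 (-4) 2 y + pe (-1) (-1) (-2) 1 y + 2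
noncomputable def W1 (y : ℝ) : ℝ :=
  pe 4 0 0 4 y + pe 2 (-3) 0 3 y + pe (-4) (-4) (-8) 2 y + pe (-2) (-5) (-2) 1 y
noncomputable def W2 (y : ℝ) : ℝ :=
  pe 16 0 0 4 y + pe 3 (-9) 0 3 y + pe (-12) (-24) (-16) 2 y + pe (-7) (-9) (-2) 1 y
noncomputable def W3 (y : ℝ) : ℝ :=
  pe 64 0 0 4 y + pe 0 (-27) 0 3 y + pe (-48) (-80) (-32) 2 y + pe (-16) (-13) (-2) 1 y
noncomputable def W4 (y : ℝ) : ℝ :=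
  pe 256 0 0 4 y + pe (-27) (-81) 0 3 y + pe (-176) (-224) (-64) 2 y + pe (-29) (-17) (-2) 1 y

lemma hasDerivAt_W0 (x : ℝ) : HasDerivAt W0 (W1 x) x := by
  unfold W0
  have h := ((((hasDerivAt_pe 1 0 0 4 x).add (hasDerivAt_pe 1 (-1) 0 3 x)).add
      (hasDerivAt_pe (-3) 2 (-4) 2 x)).add (hasDerivAt_pe (-1) (-1) (-2) 1 x)).add_const 2
  refine (h).congr_deriv ?_
  unfold W1 pe
  push_cast
  ring

lemma hasDerivAt_W1 (x : ℝ) : HasDerivAt W1 (W2 x) x := by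
  unfold W1
  have h := (((hasDerivAt_pe 4 0 0 4 x).add (hasDerivAt_pe 2 (-3) 0 3 x)).add
      (hasDerivAt_pe (-4) (-4) (-8) 2 x)).add (hasDerivAt_pe (-2) (-5) (-2) 1 x)
  refine (h).congr_deriv ?_
  unfold W2 pe
  push_cast
  ring

lemma hasDerivAt_W2 (x : ℝ) : HasDerivAt W2 (W3 x) x := by
  unfold W2
  have h := (((hasDerivAt_pe 16 0 0 4 x).add (hasDerivAt_pe 3 (-9) 0 3 x)).add
      (hasDerivAt_pe (-12) (-24) (-16) 2 x)).add (hasDerivAt_pe (-7) (-9) (-2) 1 x)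
  refine (h).congr_deriv ?_
  unfold W3 pe
  push_cast
  ring

lemma hasDerivAt_W3 (x : ℝ) : HasDerivAt W3 (W4 x) x := by
  unfold W3
  have h := (((hasDerivAt_pe 64 0 0 4 x).add (hasDerivAt_pe 0 (-27) 0 3 x)).add
      (hasDerivAt_pe (-48) (-80) (-32) 2 x)).add (hasDerivAt_pe (-16) (-13) (-2) 1 x)
  refine (h).congr_deriv ?_
  unfold W4 pe
  push_cast
  ring


lemma le_on_Ici {F F' : ℝ → ℝ} (hd : ∀ x, HasDerivAt F (F' x) x)
    (hF' : ∀ x, 0 ≤ x → 0 ≤ F' x) {x : ℝ} (hx : 0 ≤ x) : F 0 ≤ F x := by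
  have hm : MonotoneOn F (Set.Ici 0) := by
    apply monotoneOn_of_deriv_nonneg (convex_Ici 0)
    · exact (Differentiable.continuous fun y => (hd y).differentiableAt).continuousOn
    · intro y hy
      exact (hd y).differentiableAt.differentiableWithinAt
    · intro y hy
      rw [interior_Ici] at hy
      rw [(hd y).deriv]
      exact hF' y (le_of_lt hy)
  exact hm Set.self_mem_Ici hx hx

lemma cubic_le_exp {x : ℝ} (hx : 0 ≤ x) : 1 + x + x ^ 2 / 2 + x ^ 3 / 6 ≤ Real.exp x := by
  have h := Real.sum_le_exp_of_nonneg hx 4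
  simp [Finset.sum_range_succ, Nat.factorial] at h
  linarith [h]

lemma W4_ge {x : ℝ} (hx : 0 ≤ x) : 6 ≤ W4 x := by
  have hcu := cubic_le_exp hx
  have hu1 : 1 ≤ Real.exp x := by nlinarith [pow_nonneg hx 2, pow_nonneg hx 3]
  have hu0 : (0:ℝ) < Real.exp x := Real.exp_pos x
  set u := Real.exp x with hu_def
  have key : 6 ≤ 256 * u - (66 * x ^ 2 + 322 * x + 232) := by
    nlinarith [sq_nonneg (x - 33 / 62), pow_nonneg hx 3]
  have hu3 : (1:ℝ) ≤ u ^ 3 := one_le_pow₀ hu1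
  have h2 : u ^ 2 ≤ u ^ 3 := by nlinarith
  have h1 : u ≤ u ^ 3 := by nlinarith
  unfold W4 pe
  nlinarith [mul_le_mul_of_nonneg_left key (le_of_lt (pow_pos hu0 3)),
    mul_nonneg (by nlinarith : (0:ℝ) ≤ 176 + 224 * x + 64 * x ^ 2) (sub_nonneg.2 h2),
    mul_nonneg (by nlinarith : (0:ℝ) ≤ 29 + 17 * x + 2 * x ^ 2) (sub_nonneg.2 h1), hu3]

lemma W3_ge {x : ℝ} (hx : 0 ≤ x) : 6 * x ≤ W3 x := by
  have hd : ∀ y : ℝ, HasDerivAt (fun z => W3 z - 6 * z) (W4 y - 6) y := by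
    intro y
    exact ((hasDerivAt_W3 y).sub ((hasDerivAt_id y).const_mul 6)).congr_deriv (by ring)
  have h := le_on_Ici hd (fun y hy => by linarith [W4_ge hy]) hx
  have h0 : W3 0 - 6 * 0 = 0 := by unfold W3 pe; norm_num
  simp only [h0] at h
  linarith

lemma W2_ge {x : ℝ} (hx : 0 ≤ x) : 3 * x ^ 2 ≤ W2 x := by
  have hd : ∀ y : ℝ, HasDerivAt (fun z => W2 z - 3 * z ^ 2) (W3 y - 6 * y) y := by
    intro y
    have := (hasDerivAt_W2 y).sub ((hasDerivAt_pow 2 y).const_mul 3)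
    refine (this).congr_deriv ?_
    all_goals (push_cast; ring)
  have h := le_on_Ici hd (fun y hy => by linarith [W3_ge hy]) hx
  have h0 : W2 0 - 3 * (0:ℝ) ^ 2 = 0 := by unfold W2 pe; norm_num
  simp only [h0] at h
  linarith

lemma W1_ge {x : ℝ} (hx : 0 ≤ x) : x ^ 3 ≤ W1 x := by
  have hd : ∀ y : ℝ, HasDerivAt (fun z => W1 z - z ^ 3) (W2 y - 3 * y ^ 2) y := by
    intro y
    have := (hasDerivAt_W1 y).sub (hasDerivAt_pow 3 y)
    refine (this).congr_deriv ?_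
    all_goals (push_cast; ring)
  have h := le_on_Ici hd (fun y hy => by linarith [W2_ge hy]) hx
  have h0 : W1 0 - (0:ℝ) ^ 3 = 0 := by unfold W1 pe; norm_num
  simp only [h0] at h
  linarith

lemma W0_ge {x : ℝ} (hx : 0 ≤ x) : x ^ 4 / 4 ≤ W0 x := by
  have hd : ∀ y : ℝ, HasDerivAt (fun z => W0 z - z ^ 4 / 4) (W1 y - y ^ 3) y := by
    intro y
    have := (hasDerivAt_W0 y).sub ((hasDerivAt_pow 4 y).div_const 4)
    refine (this).congr_deriv ?_
    all_goals (push_cast; ring)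
  have h := le_on_Ici hd (fun y hy => by linarith [W1_ge hy]) hx
  have h0 : W0 0 - (0:ℝ) ^ 4 / 4 = 0 := by unfold W0 pe; norm_num
  simp only [h0] at h
  linarith


noncomputable def Nn (y : ℝ) : ℝ := y * (Real.exp y - 1) * (Real.exp y + 2)
noncomputable def Dd (y : ℝ) : ℝ := Real.exp y ^ 2 - 1 - 2 * y
noncomputable def hpo (y : ℝ) : ℝ := Nn y / Dd y

lemma Dd_pos {x : ℝ} (hx : 0 < x) : 0 < Dd x := by
  have h := Real.add_one_lt_exp (x := 2 * x) (by positivity)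
  unfold Dd
  rw [sq, ← Real.exp_add, show x + x = 2 * x from by ring]
  linarith

lemma hasDerivAt_Nn (x : ℝ) : HasDerivAt Nn
    ((Real.exp x - 1) * (Real.exp x + 2) + x * Real.exp x * (Real.exp x + 2) +
      x * (Real.exp x - 1) * Real.exp x) x := by
  unfold Nn
  have h := ((hasDerivAt_id x).mul ((Real.hasDerivAt_exp x).sub_const 1)).mul
    ((Real.hasDerivAt_exp x).add_const 2)
  refine (h).congr_deriv ?_
  all_goals (simp; ring)

lemma hasDerivAt_Dd (x : ℝ) : HasDerivAt Dd (2 * Real.exp x ^ 2 - 2) x := by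
  unfold Dd
  have h := (((Real.hasDerivAt_exp x).pow 2).sub_const 1).sub ((hasDerivAt_id x).const_mul 2)
  refine (h).congr_deriv ?_
  all_goals (push_cast; simp; ring)

lemma hasDerivAt_hpo {x : ℝ} (hx : 0 < x) : HasDerivAt hpo (W0 x / Dd x ^ 2) x := by
  have h := (hasDerivAt_Nn x).div (hasDerivAt_Dd x) (ne_of_gt (Dd_pos hx))
  have key : W0 x = ((Real.exp x - 1) * (Real.exp x + 2) + x * Real.exp x * (Real.exp x + 2) +
      x * (Real.exp x - 1) * Real.exp x) * Dd x - Nn x * (2 * Real.exp x ^ 2 - 2) := by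
    unfold W0 pe Nn Dd
    ring
  unfold hpo
  rw [key]
  exact h

lemma cont_Nn : Continuous Nn := by unfold Nn; fun_prop
lemma cont_Dd : Continuous Dd := by unfold Dd; fun_prop

lemma hpo_contOn : ContinuousOn hpo (Set.Ioi 0) :=
  ContinuousOn.div cont_Nn.continuousOn cont_Dd.continuousOn (fun x hx => (Dd_pos hx).ne')

lemma hpo_mono : StrictMonoOn hpo (Set.Ioi 0) := by
  apply strictMonoOn_of_deriv_pos (convex_Ioi 0) hpo_contOn
  intro x hx
  rw [interior_Ioi] at hx
  rw [(hasDerivAt_hpo hx).deriv]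
  have hW := W0_ge (le_of_lt hx)
  have hD := Dd_pos hx
  exact div_pos (by nlinarith [pow_pos (Set.mem_Ioi.1 hx) 4]) (by positivity)

lemma aux1 {t : ℝ} (ht : 0 ≤ t) : 0 ≤ (t + t ^ 2 / 2 - 1) * Real.exp t + 1 := by
  have hd : ∀ y : ℝ, HasDerivAt (fun z : ℝ => (z + z ^ 2 / 2 - 1) * Real.exp z + 1)
      ((2 * y + y ^ 2 / 2) * Real.exp y) y := by
    intro y
    have h := ((((hasDerivAt_id y).add ((hasDerivAt_pow 2 y).div_const 2)).sub_const 1).mul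
      (Real.hasDerivAt_exp y)).add_const 1
    refine (h).congr_deriv ?_
    all_goals (push_cast; simp; ring)
  have h := le_on_Ici hd (fun y hy => by positivity) ht
  norm_num at h
  linarith

lemma exp_sub_quad {t : ℝ} (ht : 0 ≤ t) : Real.exp t ≤ 1 + t + t ^ 2 / 2 * Real.exp t := by
  have hd : ∀ y : ℝ, HasDerivAt (fun z : ℝ => z ^ 2 / 2 * Real.exp z - Real.exp z + 1 + z)
      ((y + y ^ 2 / 2 - 1) * Real.exp y + 1) y := by
    intro y
    have h := ((((hasDerivAt_pow 2 y).div_const 2).mul (Real.hasDerivAt_exp y)).sub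
      (Real.hasDerivAt_exp y)).add_const 1
    have h2 := h.add (hasDerivAt_id y)
    refine (h2).congr_deriv ?_
    all_goals (push_cast; simp; ring)
  have h := le_on_Ici hd (fun y hy => aux1 hy) ht
  norm_num at h
  linarith

lemma Dd_le {x : ℝ} (hx : 0 ≤ x) : Dd x ≤ 2 * x ^ 2 * Real.exp x ^ 2 := by
  have h := exp_sub_quad (t := 2 * x) (by linarith)
  unfold Dd
  rw [sq, ← Real.exp_add, show x + x = 2 * x from by ring]
  nlinarith [h]

lemma hpo_gap {M y x : ℝ} (hy : 0 < y) (hyx : y ≤ x) (hxM : x ≤ M) :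
    Real.exp (-(4 * M)) / 16 * (x - y) ≤ hpo x - hpo y := by
  set c := Real.exp (-(4 * M)) / 16 with hc
  have hc0 : 0 < c := by positivity
  have hm : MonotoneOn (fun t => hpo t - c * t) (Set.Icc y x) := by
    apply monotoneOn_of_deriv_nonneg (convex_Icc y x)
    · apply ContinuousOn.sub (hpo_contOn.mono ?_) (by fun_prop)
      intro t ht
      exact lt_of_lt_of_le hy ht.1
    · intro t ht
      rw [interior_Icc] at ht
      have ht0 : 0 < t := lt_trans hy ht.1
      exact ((hasDerivAt_hpo ht0).sub ((hasDerivAt_id t).const_mul c)).differentiableAt.differentiableWithinAt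
    · intro t ht
      rw [interior_Icc] at ht
      have ht0 : 0 < t := lt_trans hy ht.1
      have hdt : HasDerivAt (fun t => hpo t - c * t) (W0 t / Dd t ^ 2 - c * 1) t :=
        (hasDerivAt_hpo ht0).sub ((hasDerivAt_id t).const_mul c)
      rw [hdt.deriv]
      have htM : t ≤ M := le_trans (le_of_lt ht.2) hxM
      have hD := Dd_pos ht0
      have hDle := Dd_le (le_of_lt ht0)
      have hD2 : Dd t ^ 2 ≤ 4 * t ^ 4 * (Real.exp t ^ 2) ^ 2 := by nlinarith [hD, hDle]
      have hW := W0_ge (le_of_lt ht0)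
      have hE : Real.exp (-(4 * M)) * (Real.exp t ^ 2) ^ 2 ≤ 1 := by
        have e1 : (Real.exp t ^ 2) ^ 2 = Real.exp t ^ 4 := by ring
        have e2 : Real.exp t ^ (4 : ℕ) = Real.exp ((4 : ℕ) * t) := (Real.exp_nat_mul t 4).symm
        rw [e1, e2, ← Real.exp_add]
        apply Real.exp_le_one_iff.2
        push_cast
        linarith
      have hc_le : c * Dd t ^ 2 ≤ t ^ 4 / 4 := by
        calc c * Dd t ^ 2 ≤ c * (4 * t ^ 4 * (Real.exp t ^ 2) ^ 2) :=
              mul_le_mul_of_nonneg_left hD2 hc0.le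
          _ = t ^ 4 / 4 * (Real.exp (-(4 * M)) * (Real.exp t ^ 2) ^ 2) := by rw [hc]; ring
          _ ≤ t ^ 4 / 4 * 1 := mul_le_mul_of_nonneg_left hE (by positivity)
          _ = t ^ 4 / 4 := mul_one _
      have hfinal : c ≤ W0 t / Dd t ^ 2 := by
        rw [le_div_iff₀ (by positivity)]
        linarith
      linarith
  have h := hm (Set.left_mem_Icc.2 hyx) (Set.right_mem_Icc.2 hyx) hyx
  simp only at h
  linarith

lemma hpo_ge_half {b : ℝ} (hb : 1 ≤ b) : b / 2 ≤ hpo b := by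
  have hb0 : (0:ℝ) < b := lt_of_lt_of_le one_pos hb
  have hu2 : 2 ≤ Real.exp b := by
    have h1 := Real.add_one_le_exp 1
    have h2 := Real.exp_le_exp.2 hb
    linarith
  have hD := Dd_pos hb0
  rw [show hpo b = Nn b / Dd b from rfl, le_div_iff₀ hD]
  unfold Nn Dd
  nlinarith [mul_nonneg hb0.le
    (show (0:ℝ) ≤ Real.exp b ^ 2 / 2 + Real.exp b - 3 / 2 + b by nlinarith [hu2])]

lemma exp_upper {x : ℝ} (h0 : 0 ≤ x) (h1 : x ≤ 1) :
    Real.exp x ≤ 1 + x + x ^ 2 / 2 + 2 / 9 * x ^ 3 := by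
  have h := Real.exp_bound' h0 h1 (n := 3) (by norm_num)
  simp [Finset.sum_range_succ, Nat.factorial] at h
  nlinarith [h, pow_nonneg h0 3]

lemma hpo_small {a : ℝ} (ha : 0 < a) (ha2 : a ≤ 1 / 2) : hpo a ≤ 3 / 2 + 20 * a := by
  have hL := Real.quadratic_le_exp_of_nonneg ha.le
  have hU := exp_upper ha.le (by linarith)
  have hD := Dd_pos ha
  have hunn : (0:ℝ) ≤ Real.exp a := (Real.exp_pos a).le
  have hsqU : Real.exp a ^ 2 ≤ (1 + a + a ^ 2 / 2 + 2 / 9 * a ^ 3) ^ 2 := by nlinarith [hU, hunn]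
  have hsqL : (1 + a + a ^ 2 / 2) ^ 2 ≤ Real.exp a ^ 2 := by nlinarith [hL, hunn]
  rw [show hpo a = Nn a / Dd a from rfl, div_le_iff₀ hD]
  unfold Nn Dd
  nlinarith [hsqU, hsqL, hU, hL, ha, ha2, mul_pos ha ha, pow_pos ha 3,
    mul_nonneg (mul_nonneg ha.le ha.le) (show (0:ℝ) ≤ 1/2 - a by linarith),
    mul_nonneg (mul_nonneg (mul_nonneg ha.le ha.le) ha.le) (show (0:ℝ) ≤ 1/2 - a by linarith)]


lemma exists_root {α : ℝ} (hα : 3 / 2 < α) : ∃ l, 0 < l ∧ hpo l = α := by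
  set a := min (1 / 2 : ℝ) ((α - 3 / 2) / 40) with ha_def
  have ha0 : 0 < a := lt_min (by norm_num) (by linarith)
  have ha2 : a ≤ 1 / 2 := min_le_left _ _
  have ha40 : a ≤ (α - 3 / 2) / 40 := min_le_right _ _
  have hsmall : hpo a < α := by
    have h := hpo_small ha0 ha2
    linarith
  set b := max 1 (2 * α) with hb_def
  have hb1 : (1:ℝ) ≤ b := le_max_left _ _
  have hbα : 2 * α ≤ b := le_max_right _ _
  have hbig : α ≤ hpo b := by
    have := hpo_ge_half hb1
    linarith
  have hab : a ≤ b := le_trans ha2 (by linarith)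
  have hsub : Set.Icc a b ⊆ Set.Ioi 0 := fun t ht => lt_of_lt_of_le ha0 ht.1
  have hiv := intermediate_value_Icc hab (hpo_contOn.mono hsub)
  obtain ⟨l, hl, hleq⟩ := hiv ⟨hsmall.le, hbig⟩
  exact ⟨l, lt_of_lt_of_le ha0 hl.1, hleq⟩


lemma hpo_eq (l : ℝ) : l * fpo 1 l * gpo 2 l / fpo 2 (2 * l) = hpo l := by
  unfold fpo gpo hpo Nn Dd
  simp only [Finset.sum_range_succ, Finset.sum_range_zero, Nat.factorial]
  rw [show Real.exp l ^ 2 = Real.exp (2 * l) from by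
    rw [sq, ← Real.exp_add, two_mul]]
  push_cast
  ring_nf

/-- For every real `α > 3/2`, the equation `λ·f₁(λ)·g₂(λ)/f₂(2λ) = α` has exactly one
positive solution; moreover, for every `ε > 0` there is `ε' > 0` such that for
`α, β ∈ (3/2, 3/2 + ε)` the corresponding solutions `lα, lβ` satisfy
`|lα − lβ| ≤ ε'·|α − β|`. -/

theorem stmt5 :
    (∀ α : ℝ, 3 / 2 < α →
      ∃! l : ℝ, 0 < l ∧ l * fpo 1 l * gpo 2 l / fpo 2 (2 * l) = α) ∧
    (∀ ε : ℝ, 0 < ε → ∃ ε' : ℝ, 0 < ε' ∧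
      ∀ α β lα lβ : ℝ,
        α ∈ Set.Ioo (3 / 2 : ℝ) (3 / 2 + ε) → β ∈ Set.Ioo (3 / 2 : ℝ) (3 / 2 + ε) →
        0 < lα → lα * fpo 1 lα * gpo 2 lα / fpo 2 (2 * lα) = α →
        0 < lβ → lβ * fpo 1 lβ * gpo 2 lβ / fpo 2 (2 * lβ) = β →
        |lα - lβ| ≤ ε' * |α - β|) := by
  constructor
  · intro α hα
    obtain ⟨l, hl0, hle⟩ := exists_root hα
    refine ⟨l, ⟨hl0, by rw [hpo_eq]; exact hle⟩, ?_⟩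
    rintro m ⟨hm0, hme⟩
    have hme' : hpo m = α := by rw [← hpo_eq]; exact hme
    exact hpo_mono.injOn (Set.mem_Ioi.2 hm0) (Set.mem_Ioi.2 hl0) (by rw [hme', hle])
  · intro ε hε
    set M : ℝ := 4 + 2 * ε with hM
    refine ⟨16 * Real.exp (4 * M), by positivity, ?_⟩
    intro α β lα lβ hαm hβm hlα heα hlβ heβ
    rw [hpo_eq] at heα heβ
    have key : ∀ γ l : ℝ, γ ∈ Set.Ioo (3 / 2 : ℝ) (3 / 2 + ε) → 0 < l → hpo l = γ → l ≤ M := by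
      intro γ l hγ hl he
      by_contra hgt
      push_neg at hgt
      have hM1 : (1 : ℝ) ≤ M := by rw [hM]; linarith
      have hMpos : (0 : ℝ) < M := by linarith
      have h1 := hpo_ge_half hM1
      have h2 : hpo M < hpo l := hpo_mono (Set.mem_Ioi.2 hMpos) (Set.mem_Ioi.2 hl) hgt
      rw [he] at h2
      have hγ2 := hγ.2
      have hMe : M = 4 + 2 * ε := hM
      linarith
    have hlαM := key α lα hαm hlα heα
    have hlβM := key β lβ hβm hlβ heβ
    have hec : 16 * Real.exp (4 * M) * (Real.exp (-(4 * M)) / 16) = 1 := by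
      field_simp
      rw [← Real.exp_add]
      simp
    rcases le_total lα lβ with hcase | hcase
    · have hgap := hpo_gap hlα hcase hlβM
      rw [heα, heβ] at hgap
      have hpos : (0 : ℝ) < Real.exp (-(4 * M)) / 16 := by positivity
      have h1 : 0 ≤ β - α := by nlinarith [hgap, hpos, hcase]
      rw [abs_sub_comm, abs_of_nonneg (by linarith : (0 : ℝ) ≤ lβ - lα), abs_sub_comm,
        abs_of_nonneg h1]
      have h2 := mul_le_mul_of_nonneg_left hgap
        (by positivity : (0 : ℝ) ≤ 16 * Real.exp (4 * M))
      calc lβ - lα = 16 * Real.exp (4 * M) * (Real.exp (-(4 * M)) / 16) * (lβ - lα) := by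
            rw [hec]; ring
        _ ≤ 16 * Real.exp (4 * M) * (β - α) := by rw [mul_assoc]; exact h2
    · have hgap := hpo_gap hlβ hcase hlαM
      rw [heα, heβ] at hgap
      have hpos : (0 : ℝ) < Real.exp (-(4 * M)) / 16 := by positivity
      have h1 : 0 ≤ α - β := by nlinarith [hgap, hpos, hcase]
      rw [abs_of_nonneg (by linarith : (0 : ℝ) ≤ lα - lβ), abs_of_nonneg h1]
      have h2 := mul_le_mul_of_nonneg_left hgap
        (by positivity : (0 : ℝ) ≤ 16 * Real.exp (4 * M))
      calc lα - lβ = 16 * Real.exp (4 * M) * (Real.exp (-(4 * M)) / 16) * (lα - lβ) := by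
            rw [hec]; ring
        _ ≤ 16 * Real.exp (4 * M) * (α - β) := by rw [mul_assoc]; exact h2

end Stmt5
end

section
/- Let α > 0 and β be real constants, let φ(n) → 0, ψ(n) → 0, T_n → ∞ and s_n → ∞ be real sequences, fix z ∈ ℝ, and let P_n = z + ℤ. Define f_n(x) = exp( −α·x^2 + β·x + φ(n)·x^2 + ψ(n)·x ). Then (1/s_n) · Σ_{x ∈ P_n/s_n, |x| ≤ T_n} f_n(x) → exp( β^2/(4α) ) · sqrt(π/α) as n → ∞, where P_n/s_n = { p/s_n : p ∈ P_n }. -/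
open Filter Topology MeasureTheory
open scoped Real

namespace Stmt10

lemma complete_sq {a : ℝ} (ha : a ≠ 0) (b x : ℝ) :
    -a * x ^ 2 + b * x = b ^ 2 / (4 * a) + -a * (x - b / (2 * a)) ^ 2 := by
  field_simp
  ring

lemma exp_eq {a : ℝ} (ha : a ≠ 0) (b x : ℝ) :
    Real.exp (-a * x ^ 2 + b * x)
      = Real.exp (b ^ 2 / (4 * a)) * Real.exp (-a * (x - b / (2 * a)) ^ 2) := by
  rw [← Real.exp_add, ← complete_sq ha]

/-- Majorant function. -/
noncomputable def hbf (a b s x : ℝ) : ℝ :=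
  Real.exp (b ^ 2 / (4 * a)) * Real.exp (-a * (max (|x - b / (2 * a)| - 1 / s) 0) ^ 2)

/-- Minorant function. -/
noncomputable def lbf (a b s x : ℝ) : ℝ :=
  Real.exp (b ^ 2 / (4 * a)) * Real.exp (-a * (|x - b / (2 * a)| + 1 / s) ^ 2)

lemma hbf_cont (a b s : ℝ) : Continuous (fun x => hbf a b s x) := by
  unfold hbf; fun_prop

lemma lbf_cont (a b s : ℝ) : Continuous (fun x => lbf a b s x) := by
  unfold lbf; fun_prop

lemma lbf_nonneg (a b s x : ℝ) : 0 ≤ lbf a b s x := by unfold lbf; positivity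

lemma hbf_nonneg (a b s x : ℝ) : 0 ≤ hbf a b s x := by unfold hbf; positivity

lemma point_bounds {a : ℝ} (ha : 0 < a) (b : ℝ) {s : ℝ} (u x : ℝ) (hux : |x - u| ≤ 1 / s) :
    lbf a b s x ≤ Real.exp (-a * u ^ 2 + b * u) ∧
      Real.exp (-a * u ^ 2 + b * u) ≤ hbf a b s x := by
  rw [exp_eq ha.ne' b u]
  set m := b / (2 * a) with hm
  have h1 : |u - m| ≤ |x - m| + 1 / s := by
    calc |u - m| ≤ |x - m| + |x - u| := by
          rw [abs_sub_comm x u]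
          calc |u - m| = |(u - x) + (x - m)| := by ring_nf
          _ ≤ |u - x| + |x - m| := abs_add_le _ _
          _ = |x - m| + |u - x| := by ring
    _ ≤ |x - m| + 1 / s := by linarith
  have h2 : max (|x - m| - 1 / s) 0 ≤ |u - m| := by
    apply max_le _ (abs_nonneg _)
    have : |x - m| ≤ |u - m| + 1 / s := by
      calc |x - m| = |(x - u) + (u - m)| := by ring_nf
      _ ≤ |x - u| + |u - m| := abs_add_le _ _
      _ ≤ 1 / s + |u - m| := by linarith
      _ = |u - m| + 1 / s := by ring
    linarith
  constructor
  · unfold lbf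
    apply mul_le_mul_of_nonneg_left _ (Real.exp_pos _).le
    rw [Real.exp_le_exp]
    have : (u - m) ^ 2 ≤ (|x - m| + 1 / s) ^ 2 := by
      rw [← sq_abs (u - m)]
      apply pow_le_pow_left₀ (abs_nonneg _) h1
    nlinarith
  · unfold hbf
    apply mul_le_mul_of_nonneg_left _ (Real.exp_pos _).le
    rw [Real.exp_le_exp]
    have : (max (|x - m| - 1 / s) 0) ^ 2 ≤ (u - m) ^ 2 := by
      rw [← sq_abs (u - m)]
      apply pow_le_pow_left₀ (le_max_right _ _) h2
    nlinarith

lemma interval_upper {a : ℝ} (ha : 0 < a) (b : ℝ) {s : ℝ} (hs : 0 < s) (u : ℝ) :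
    (1 / s) * Real.exp (-a * u ^ 2 + b * u) ≤ ∫ x in u..(u + 1 / s), hbf a b s x := by
  have h0 : (0:ℝ) < 1 / s := by positivity
  have hle : u ≤ u + 1 / s := by linarith
  have : ∫ x in u..(u + 1 / s), Real.exp (-a * u ^ 2 + b * u)
      ≤ ∫ x in u..(u + 1 / s), hbf a b s x := by
    apply intervalIntegral.integral_mono_on hle
    · exact intervalIntegrable_const
    · exact (hbf_cont a b s).intervalIntegrable _ _
    · intro x hx
      apply (point_bounds ha b u x _).2
      rw [Set.mem_Icc] at hx
      rw [abs_le]; constructor <;> linarith [hx.1, hx.2]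
  calc (1 / s) * Real.exp (-a * u ^ 2 + b * u)
      = ∫ x in u..(u + 1 / s), Real.exp (-a * u ^ 2 + b * u) := by
        rw [intervalIntegral.integral_const]; simp [smul_eq_mul]
  _ ≤ _ := this

lemma interval_lower {a : ℝ} (ha : 0 < a) (b : ℝ) {s : ℝ} (hs : 0 < s) (u : ℝ) :
    (∫ x in u..(u + 1 / s), lbf a b s x) ≤ (1 / s) * Real.exp (-a * u ^ 2 + b * u) := by
  have h0 : (0:ℝ) < 1 / s := by positivity
  have hle : u ≤ u + 1 / s := by linarith
  have : ∫ x in u..(u + 1 / s), lbf a b s x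
      ≤ ∫ x in u..(u + 1 / s), Real.exp (-a * u ^ 2 + b * u) := by
    apply intervalIntegral.integral_mono_on hle
    · exact (lbf_cont a b s).intervalIntegrable _ _
    · exact intervalIntegrable_const
    · intro x hx
      apply (point_bounds ha b u x _).1
      rw [Set.mem_Icc] at hx
      rw [abs_le]; constructor <;> linarith [hx.1, hx.2]
  calc (∫ x in u..(u + 1 / s), lbf a b s x)
      ≤ ∫ x in u..(u + 1 / s), Real.exp (-a * u ^ 2 + b * u) := this
  _ = (1 / s) * Real.exp (-a * u ^ 2 + b * u) := by
        rw [intervalIntegral.integral_const]; simp [smul_eq_mul]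

lemma sum_collapse {f : ℝ → ℝ} (hf : Continuous f) (z : ℝ) {s : ℝ} (hs : 0 < s) (K₁ : ℤ) :
    ∀ K₂ : ℤ, K₁ - 1 ≤ K₂ →
      ∑ k ∈ Finset.Icc K₁ K₂, ∫ x in ((z + (k:ℝ)) / s)..((z + ((k:ℝ) + 1)) / s), f x
        = ∫ x in ((z + (K₁:ℝ)) / s)..((z + ((K₂:ℝ) + 1)) / s), f x := by
  refine fun K₂ hK => Int.le_induction (motive := fun K₂ _ =>
      ∑ k ∈ Finset.Icc K₁ K₂, ∫ x in ((z + (k:ℝ)) / s)..((z + ((k:ℝ) + 1)) / s), f x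
        = ∫ x in ((z + (K₁:ℝ)) / s)..((z + ((K₂:ℝ) + 1)) / s), f x) ?_ ?_ K₂ hK
  · show _ = _
    rw [Finset.Icc_eq_empty (by omega)]
    simp only [Finset.sum_empty]
    push_cast
    rw [show z + ((K₁:ℝ) - 1 + 1) = z + K₁ by ring, intervalIntegral.integral_same]
  · intro n hn ih
    show _ = _
    have hins : Finset.Icc K₁ (n + 1) = insert (n + 1) (Finset.Icc K₁ n) := by
      ext x; simp only [Finset.mem_Icc, Finset.mem_insert]; omega
    rw [hins, Finset.sum_insert (by simp only [Finset.mem_Icc]; omega), ih, add_comm]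
    push_cast
    apply intervalIntegral.integral_add_adjacent_intervals <;>
      exact hf.intervalIntegrable _ _

/-- Constant for the dominating function. -/
noncomputable def Cb (α β : ℝ) : ℝ :=
  Real.exp ((|β| + 1) ^ 2 / (2 * α) + α * ((|β| + 1) / α) ^ 2 + α)

lemma Cb_pos (α β : ℝ) : 0 < Cb α β := Real.exp_pos _

set_option maxHeartbeats 1000000 in
lemma dom_bounds {α β : ℝ} (hα : 0 < α) {a b s : ℝ} (ha2 : α / 2 ≤ a)
    (hbb : |b| ≤ |β| + 1) (hs : 1 ≤ s) (x : ℝ) :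
    hbf a b s x ≤ Cb α β * Real.exp (-(α / 8) * x ^ 2) ∧
      lbf a b s x ≤ Cb α β * Real.exp (-(α / 8) * x ^ 2) := by
  have ha : 0 < a := lt_of_lt_of_le (by positivity) ha2
  have hs0 : (0:ℝ) < s := by linarith
  simp only [hbf, lbf, Cb, ← Real.exp_add, Real.exp_le_exp]
  obtain ⟨m, hmdef⟩ : ∃ m : ℝ, b / (2 * a) = m := ⟨_, rfl⟩
  obtain ⟨mb, hmbdef⟩ : ∃ mb : ℝ, (|β| + 1) / α = mb := ⟨_, rfl⟩
  obtain ⟨c, hcdef⟩ : ∃ c : ℝ, b ^ 2 / (4 * a) = c := ⟨_, rfl⟩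
  rw [hmdef, hmbdef, hcdef]
  have hmb0 : 0 ≤ mb := hmbdef ▸ by positivity
  have hm : |m| ≤ mb := by
    rw [← hmdef, ← hmbdef, abs_div, abs_of_pos (by linarith : (0:ℝ) < 2 * a)]
    exact div_le_div₀ (by positivity) hbb hα (by linarith)
  have hm2 : m ^ 2 ≤ mb ^ 2 := by
    rw [← sq_abs m]; exact pow_le_pow_left₀ (abs_nonneg _) hm 2
  have hMn : c ≤ (|β| + 1) ^ 2 / (2 * α) := by
    rw [← hcdef]
    apply div_le_div₀ (by positivity) _ (by positivity) (by linarith)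
    rw [← sq_abs b]; exact pow_le_pow_left₀ (abs_nonneg _) hbb 2
  obtain ⟨t, htdef⟩ : ∃ t : ℝ, |x - m| = t := ⟨_, rfl⟩
  rw [htdef]
  have ht0 : 0 ≤ t := htdef ▸ abs_nonneg _
  have htx : x ^ 2 / 2 - mb ^ 2 ≤ t ^ 2 := by
    have h1 : x ^ 2 / 2 - m ^ 2 ≤ (x - m) ^ 2 := by nlinarith [sq_nonneg (x - 2 * m)]
    have h2 : (x - m) ^ 2 = t ^ 2 := by rw [← htdef, sq_abs]
    nlinarith
  have htx4 : α / 4 * (x ^ 2 / 2 - mb ^ 2) ≤ α / 4 * t ^ 2 :=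
    mul_le_mul_of_nonneg_left htx (by positivity)
  have htx2 : α / 2 * (x ^ 2 / 2 - mb ^ 2) ≤ α / 2 * t ^ 2 :=
    mul_le_mul_of_nonneg_left htx (by positivity)
  have hx8 : 0 ≤ α / 8 * x ^ 2 := by positivity
  have hmb2 : 0 ≤ mb ^ 2 := sq_nonneg _
  have hambn : 0 ≤ α * mb ^ 2 := by positivity
  have hinvs : (0:ℝ) < 1 / s := by positivity
  have hinvs1 : 1 / s ≤ 1 := by rw [div_le_one hs0]; linarith
  constructor
  · obtain ⟨M, hMdef⟩ : ∃ M : ℝ, max (t - 1 / s) 0 = M := ⟨_, rfl⟩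
    rw [hMdef]
    have hM0 : 0 ≤ M := hMdef ▸ le_max_right _ _
    have hMt : t ^ 2 / 2 - 1 ≤ M ^ 2 := by
      rcases le_or_gt t 1 with h | h
      · nlinarith
      · have h1 : t - 1 ≤ M := by rw [← hMdef]; exact le_max_of_le_left (by linarith)
        have h2 : (t - 1) ^ 2 ≤ M ^ 2 := pow_le_pow_left₀ (by linarith) h1 2
        nlinarith [sq_nonneg (t - 2)]
    have h1 : α / 2 * M ^ 2 ≤ a * M ^ 2 :=
      mul_le_mul_of_nonneg_right (by linarith) (sq_nonneg _)
    have h2 : α / 2 * (t ^ 2 / 2 - 1) ≤ α / 2 * M ^ 2 :=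
      mul_le_mul_of_nonneg_left hMt (by positivity)
    linarith
  · have h1 : t ^ 2 ≤ (t + 1 / s) ^ 2 := by nlinarith
    have h2 : α / 2 * t ^ 2 ≤ α / 2 * (t + 1 / s) ^ 2 :=
      mul_le_mul_of_nonneg_left h1 (by positivity)
    have h3 : α / 2 * (t + 1 / s) ^ 2 ≤ a * (t + 1 / s) ^ 2 :=
      mul_le_mul_of_nonneg_right (by linarith) (sq_nonneg _)
    linarith

lemma integral_g {α : ℝ} (hα : 0 < α) (β : ℝ) :
    ∫ x : ℝ, Real.exp (-α * x ^ 2 + β * x)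
      = Real.exp (β ^ 2 / (4 * α)) * Real.sqrt (π / α) := by
  have : ∀ x : ℝ, Real.exp (-α * x ^ 2 + β * x)
      = Real.exp (β ^ 2 / (4 * α)) * Real.exp (-α * (x - β / (2 * α)) ^ 2) :=
    fun x => exp_eq hα.ne' β x
  simp_rw [this]
  rw [MeasureTheory.integral_const_mul]
  rw [integral_sub_right_eq_self (fun y => Real.exp (-α * y ^ 2)) (β / (2 * α))]
  rw [integral_gaussian]

lemma finsum_eq {T s : ℝ} (z : ℝ) (hs : 0 < s) (f : ℝ → ℝ) :
    (∑ᶠ (x : ℝ) (_ : (∃ k : ℤ, x = (z + k) / s) ∧ |x| ≤ T), f x)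
      = ∑ k ∈ Finset.Icc ⌈-(T * s) - z⌉ ⌊T * s - z⌋, f ((z + k) / s) := by
  show (∑ᶠ x ∈ {x : ℝ | (∃ k : ℤ, x = (z + k) / s) ∧ |x| ≤ T}, f x) = _
  have hset : {x : ℝ | (∃ k : ℤ, x = (z + k) / s) ∧ |x| ≤ T}
      = ↑((Finset.Icc ⌈-(T * s) - z⌉ ⌊T * s - z⌋).image (fun k : ℤ => (z + k) / s)) := by
    ext x
    simp only [Set.mem_setOf_eq, Finset.coe_image, Set.mem_image, Finset.mem_coe,
      Finset.mem_Icc]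
    constructor
    · rintro ⟨⟨k, rfl⟩, habs⟩
      rw [abs_div, abs_of_pos hs, div_le_iff₀ hs] at habs
      rw [abs_le] at habs
      refine ⟨k, ⟨?_, ?_⟩, rfl⟩
      · rw [Int.ceil_le]; push_cast; linarith [habs.1]
      · rw [Int.le_floor]; push_cast; linarith [habs.2]
    · rintro ⟨k, ⟨h1, h2⟩, rfl⟩
      rw [Int.ceil_le] at h1; rw [Int.le_floor] at h2
      refine ⟨⟨k, rfl⟩, ?_⟩
      rw [abs_div, abs_of_pos hs, div_le_iff₀ hs, abs_le]
      constructor <;> push_cast at h1 h2 ⊢ <;> linarith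
  rw [hset, finsum_mem_coe_finset, Finset.sum_image]
  intro k _ k' _ h
  field_simp at h
  exact_mod_cast add_left_cancel h

lemma KK_le {T s : ℝ} (z : ℝ) (hs : 1 ≤ s) (hT : 1 ≤ T) :
    (⌈-(T * s) - z⌉ : ℤ) - 1 ≤ ⌊T * s - z⌋ := by
  have h1 : ((⌈-(T * s) - z⌉ : ℤ) : ℝ) < (-(T * s) - z) + 1 := Int.ceil_lt_add_one _
  have h2 : (0:ℝ) ≤ T * s := by nlinarith
  rw [Int.sub_one_lt_iff.symm] at *
  apply Int.le_floor.mpr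
  push_cast
  linarith

lemma sandwich {a s T : ℝ} (b z : ℝ) (ha : 0 < a) (hs : 1 ≤ s) (hT : 1 ≤ T) :
    ((∫ x in ((z + ((⌈-(T * s) - z⌉ : ℤ) : ℝ)) / s)..((z + (((⌊T * s - z⌋ : ℤ) : ℝ) + 1)) / s),
        lbf a b s x)
       ≤ (1 / s) * ∑ k ∈ Finset.Icc ⌈-(T * s) - z⌉ ⌊T * s - z⌋,
           Real.exp (-a * ((z + k) / s) ^ 2 + b * ((z + k) / s)))
    ∧ ((1 / s) * ∑ k ∈ Finset.Icc ⌈-(T * s) - z⌉ ⌊T * s - z⌋,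
           Real.exp (-a * ((z + k) / s) ^ 2 + b * ((z + k) / s))
       ≤ ∫ x in ((z + ((⌈-(T * s) - z⌉ : ℤ) : ℝ)) / s)..((z + (((⌊T * s - z⌋ : ℤ) : ℝ) + 1)) / s),
           hbf a b s x) := by
  have hs0 : (0:ℝ) < s := by linarith
  have hKK := KK_le z hs hT
  have hstep : ∀ k : ℤ, (z + ((k:ℝ) + 1)) / s = (z + (k:ℝ)) / s + 1 / s := by
    intro k; rw [← add_div]; ring_nf
  constructor
  · rw [Finset.mul_sum]
    calc (∫ x in ((z + ((⌈-(T * s) - z⌉ : ℤ) : ℝ)) / s)..((z + (((⌊T * s - z⌋ : ℤ) : ℝ) + 1)) / s),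
            lbf a b s x)
        = ∑ k ∈ Finset.Icc ⌈-(T * s) - z⌉ ⌊T * s - z⌋,
            ∫ x in ((z + (k:ℝ)) / s)..((z + ((k:ℝ) + 1)) / s), lbf a b s x :=
          (sum_collapse (lbf_cont a b s) z hs0 _ _ hKK).symm
    _ ≤ ∑ k ∈ Finset.Icc ⌈-(T * s) - z⌉ ⌊T * s - z⌋,
            (1 / s) * Real.exp (-a * ((z + (k:ℝ)) / s) ^ 2 + b * ((z + (k:ℝ)) / s)) := by
          apply Finset.sum_le_sum
          intro k _
          rw [hstep k]
          exact interval_lower ha b hs0 _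
  · rw [Finset.mul_sum]
    calc ∑ k ∈ Finset.Icc ⌈-(T * s) - z⌉ ⌊T * s - z⌋,
            (1 / s) * Real.exp (-a * ((z + (k:ℝ)) / s) ^ 2 + b * ((z + (k:ℝ)) / s))
        ≤ ∑ k ∈ Finset.Icc ⌈-(T * s) - z⌉ ⌊T * s - z⌋,
            ∫ x in ((z + (k:ℝ)) / s)..((z + ((k:ℝ) + 1)) / s), hbf a b s x := by
          apply Finset.sum_le_sum
          intro k _
          rw [hstep k]
          exact interval_upper ha b hs0 _
    _ = _ := sum_collapse (hbf_cont a b s) z hs0 _ _ hKK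


/-- Lattice-sum approximation of a Gaussian integral: for `α > 0`, `φ(n), ψ(n) → 0`,
`T_n, s_n → ∞` and the lattice `P_n = z + ℤ`,
`(1/s_n)·Σ_{x ∈ P_n/s_n, |x| ≤ T_n} exp(−αx² + βx + φ(n)x² + ψ(n)x)
  → exp(β²/(4α))·sqrt(π/α)`. -/
theorem stmt10 (α β z : ℝ) (hα : 0 < α)
    (φ ψ T s : ℕ → ℝ)
    (hφ : Tendsto φ atTop (𝓝 0)) (hψ : Tendsto ψ atTop (𝓝 0))
    (hT : Tendsto T atTop atTop) (hs : Tendsto s atTop atTop) :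
    Tendsto (fun n : ℕ =>
        (1 / s n) *
          ∑ᶠ x ∈ {x : ℝ | (∃ k : ℤ, x = (z + k) / s n) ∧ |x| ≤ T n},
            Real.exp (-α * x ^ 2 + β * x + φ n * x ^ 2 + ψ n * x))
      atTop (𝓝 (Real.exp (β ^ 2 / (4 * α)) * Real.sqrt (π / α))) := by
  have haT : Tendsto (fun n => α - φ n) atTop (𝓝 α) := by
    simpa using tendsto_const_nhds.sub hφ
  have hbT : Tendsto (fun n => β + ψ n) atTop (𝓝 β) := by
    simpa using tendsto_const_nhds.add hψ
  have hsinv : Tendsto (fun n => 1 / s n) atTop (𝓝 0) := by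
    simp only [one_div]; exact hs.inv_tendsto_atTop
  have hφev : ∀ᶠ n in atTop, |φ n| < α / 2 := by
    have h := Metric.tendsto_nhds.mp hφ (α / 2) (by positivity)
    filter_upwards [h] with n hn
    simpa [Real.dist_eq] using hn
  have hψev : ∀ᶠ n in atTop, |ψ n| < 1 := by
    have h := Metric.tendsto_nhds.mp hψ 1 one_pos
    filter_upwards [h] with n hn
    simpa [Real.dist_eq] using hn
  have hgood : ∀ᶠ n in atTop, α / 2 ≤ α - φ n ∧ |β + ψ n| ≤ |β| + 1 ∧ 1 ≤ s n ∧ 1 ≤ T n := by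
    filter_upwards [hφev, hψev, hs.eventually_ge_atTop 1, hT.eventually_ge_atTop 1]
      with n h1 h2 h3 h4
    refine ⟨?_, ?_, h3, h4⟩
    · have := (abs_lt.mp h1).2; linarith
    · calc |β + ψ n| ≤ |β| + |ψ n| := abs_add_le _ _
      _ ≤ |β| + 1 := by linarith [(abs_lt.mp h2).2, le_of_lt h2]
  have hmT : Tendsto (fun n => (β + ψ n) / (2 * (α - φ n))) atTop (𝓝 (β / (2 * α))) :=
    hbT.div (tendsto_const_nhds.mul haT) (by positivity)
  have hMT : Tendsto (fun n => (β + ψ n) ^ 2 / (4 * (α - φ n))) atTop (𝓝 (β ^ 2 / (4 * α))) :=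
    (hbT.pow 2).div (tendsto_const_nhds.mul haT) (by positivity)
  have hbf_lim : ∀ x : ℝ, Tendsto (fun n => hbf (α - φ n) (β + ψ n) (s n) x) atTop
      (𝓝 (Real.exp (-α * x ^ 2 + β * x))) := by
    intro x
    have key : Real.exp (-α * x ^ 2 + β * x)
        = Real.exp (β ^ 2 / (4 * α)) *
          Real.exp (-α * (max (|x - β / (2 * α)| - 0) 0) ^ 2) := by
      rw [sub_zero, max_eq_left (abs_nonneg _), sq_abs]
      exact exp_eq hα.ne' β x
    rw [key]
    simp only [hbf]
    exact (hMT.rexp).mul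
      ((haT.neg.mul ((((tendsto_const_nhds.sub hmT).abs.sub hsinv).max
        tendsto_const_nhds).pow 2)).rexp)
  have hlbf_lim : ∀ x : ℝ, Tendsto (fun n => lbf (α - φ n) (β + ψ n) (s n) x) atTop
      (𝓝 (Real.exp (-α * x ^ 2 + β * x))) := by
    intro x
    have key : Real.exp (-α * x ^ 2 + β * x)
        = Real.exp (β ^ 2 / (4 * α)) *
          Real.exp (-α * (|x - β / (2 * α)| + 0) ^ 2) := by
      rw [add_zero, sq_abs]
      exact exp_eq hα.ne' β x
    rw [key]
    simp only [lbf]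
    exact (hMT.rexp).mul
      ((haT.neg.mul (((tendsto_const_nhds.sub hmT).abs.add hsinv).pow 2)).rexp)
  have hbound_int : Integrable (fun x : ℝ => Cb α β * Real.exp (-(α / 8) * x ^ 2)) :=
    (integrable_exp_neg_mul_sq (by positivity : (0:ℝ) < α / 8)).const_mul _
  -- upper limit
  have hupper : Tendsto (fun n => ∫ x : ℝ, hbf (α - φ n) (β + ψ n) (s n) x) atTop
      (𝓝 (Real.exp (β ^ 2 / (4 * α)) * Real.sqrt (π / α))) := by
    rw [← integral_g hα β]
    refine tendsto_integral_filter_of_dominated_convergence _ ?_ ?_ hbound_int ?_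
    · exact Eventually.of_forall fun n => (hbf_cont _ _ _).aestronglyMeasurable
    · filter_upwards [hgood] with n hn
      apply ae_of_all
      intro x
      rw [Real.norm_eq_abs, abs_of_nonneg (hbf_nonneg _ _ _ _)]
      exact (dom_bounds hα hn.1 hn.2.1 hn.2.2.1 x).1
    · exact ae_of_all _ fun x => hbf_lim x
  -- lower limit
  have hABev : ∀ᶠ n in atTop,
      (z + ((⌈-(T n * s n) - z⌉ : ℤ) : ℝ)) / s n
        ≤ (z + (((⌊T n * s n - z⌋ : ℤ) : ℝ) + 1)) / s n := by
    filter_upwards [hgood] with n hn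
    have hs0 : (0:ℝ) < s n := lt_of_lt_of_le one_pos hn.2.2.1
    have hK := KK_le z hn.2.2.1 hn.2.2.2
    have h2 : ((⌈-(T n * s n) - z⌉ : ℤ) : ℝ) ≤ ((⌊T n * s n - z⌋ : ℤ) : ℝ) + 1 := by
      exact_mod_cast (by omega : (⌈-(T n * s n) - z⌉ : ℤ) ≤ ⌊T n * s n - z⌋ + 1)
    exact (div_le_div_iff_of_pos_right hs0).mpr (by linarith)
  have hlower : Tendsto (fun n =>
      ∫ x in ((z + ((⌈-(T n * s n) - z⌉ : ℤ) : ℝ)) / s n)..((z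
          + (((⌊T n * s n - z⌋ : ℤ) : ℝ) + 1)) / s n),
        lbf (α - φ n) (β + ψ n) (s n) x) atTop
      (𝓝 (Real.exp (β ^ 2 / (4 * α)) * Real.sqrt (π / α))) := by
    have h1 : Tendsto (fun n => ∫ x : ℝ,
        (Set.Ioc ((z + ((⌈-(T n * s n) - z⌉ : ℤ) : ℝ)) / s n)
            ((z + (((⌊T n * s n - z⌋ : ℤ) : ℝ) + 1)) / s n)).indicator
          (fun y => lbf (α - φ n) (β + ψ n) (s n) y) x) atTop
        (𝓝 (Real.exp (β ^ 2 / (4 * α)) * Real.sqrt (π / α))) := by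
      rw [← integral_g hα β]
      refine tendsto_integral_filter_of_dominated_convergence _ ?_ ?_ hbound_int ?_
      · exact Eventually.of_forall fun n =>
          ((lbf_cont _ _ _).aestronglyMeasurable).indicator measurableSet_Ioc
      · filter_upwards [hgood] with n hn
        apply ae_of_all
        intro x
        rw [Real.norm_eq_abs,
          abs_of_nonneg (Set.indicator_nonneg (fun y _ => lbf_nonneg _ _ _ _) x)]
        exact le_trans (Set.indicator_le_self' (fun y _ => lbf_nonneg _ _ _ _) x)
          (dom_bounds hα hn.1 hn.2.1 hn.2.2.1 x).2
      · apply ae_of_all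
        intro x
        have hev : ∀ᶠ n in atTop,
            (Set.Ioc ((z + ((⌈-(T n * s n) - z⌉ : ℤ) : ℝ)) / s n)
                ((z + (((⌊T n * s n - z⌋ : ℤ) : ℝ) + 1)) / s n)).indicator
              (fun y => lbf (α - φ n) (β + ψ n) (s n) y) x
            = lbf (α - φ n) (β + ψ n) (s n) x := by
          filter_upwards [hs.eventually_ge_atTop 1, hT.eventually_ge_atTop (|x| + 2)]
            with n h1 h2
          have hs0 : (0:ℝ) < s n := lt_of_lt_of_le one_pos h1
          apply Set.indicator_of_mem
          constructor
          · -- A n < x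
            have hc : ((⌈-(T n * s n) - z⌉ : ℤ) : ℝ) < -(T n * s n) - z + 1 :=
              Int.ceil_lt_add_one _
            have hlt : (z + ((⌈-(T n * s n) - z⌉ : ℤ) : ℝ)) / s n
                < (-(T n * s n) + 1) / s n :=
              (div_lt_div_iff_of_pos_right hs0).mpr (by linarith)
            have heq : (-(T n * s n) + 1) / s n = -T n + 1 / s n := by
              field_simp
            have h1s : 1 / s n ≤ 1 := by rw [div_le_one hs0]; linarith
            have hax := neg_abs_le x
            rw [heq] at hlt
            linarith
          · -- x ≤ B n
            have hf : T n * s n - z < ((⌊T n * s n - z⌋ : ℤ) : ℝ) + 1 :=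
              Int.lt_floor_add_one _
            have hlt : (T n * s n) / s n
                < (z + (((⌊T n * s n - z⌋ : ℤ) : ℝ) + 1)) / s n :=
              (div_lt_div_iff_of_pos_right hs0).mpr (by linarith)
            have heq : (T n * s n) / s n = T n := by field_simp
            rw [heq] at hlt
            have hax := le_abs_self x
            linarith
        exact (hlbf_lim x).congr' (hev.mono fun n h => h.symm)
    refine h1.congr' ?_
    filter_upwards [hABev] with n hn
    rw [integral_indicator measurableSet_Ioc, intervalIntegral.integral_of_le hn]
  -- sandwiching
  refine tendsto_of_tendsto_of_tendsto_of_le_of_le' hlower hupper ?_ ?_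
  · filter_upwards [hgood] with n hn
    have hs0 : (0:ℝ) < s n := lt_of_lt_of_le one_pos hn.2.2.1
    have ha0 : 0 < α - φ n := lt_of_lt_of_le (by positivity) hn.1
    rw [finsum_eq z hs0]
    simp only [show ∀ y : ℝ, -α * y ^ 2 + β * y + φ n * y ^ 2 + ψ n * y
        = -(α - φ n) * y ^ 2 + (β + ψ n) * y from fun y => by ring]
    exact (sandwich (β + ψ n) z ha0 hn.2.2.1 hn.2.2.2).1
  · filter_upwards [hgood] with n hn
    have hs0 : (0:ℝ) < s n := lt_of_lt_of_le one_pos hn.2.2.1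
    have ha0 : 0 < α - φ n := lt_of_lt_of_le (by positivity) hn.1
    rw [finsum_eq z hs0]
    simp only [show ∀ y : ℝ, -α * y ^ 2 + β * y + φ n * y ^ 2 + ψ n * y
        = -(α - φ n) * y ^ 2 + (β + ψ n) * y from fun y => by ring]
    calc (1 / s n) * ∑ k ∈ Finset.Icc ⌈-(T n * s n) - z⌉ ⌊T n * s n - z⌋,
          Real.exp (-(α - φ n) * ((z + k) / s n) ^ 2 + (β + ψ n) * ((z + k) / s n))
        ≤ ∫ x in ((z + ((⌈-(T n * s n) - z⌉ : ℤ) : ℝ)) / s n)..((z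
              + (((⌊T n * s n - z⌋ : ℤ) : ℝ) + 1)) / s n),
            hbf (α - φ n) (β + ψ n) (s n) x :=
          (sandwich (β + ψ n) z ha0 hn.2.2.1 hn.2.2.2).2
    _ ≤ ∫ x : ℝ, hbf (α - φ n) (β + ψ n) (s n) x := by
          rw [intervalIntegral.integral_of_le]
          · apply setIntegral_le_integral
            · refine hbound_int.mono ((hbf_cont _ _ _).aestronglyMeasurable) ?_
              apply ae_of_all
              intro x
              rw [Real.norm_eq_abs, abs_of_nonneg (hbf_nonneg _ _ _ _),
                Real.norm_eq_abs, abs_of_nonneg (mul_nonneg (Cb_pos α β).le (Real.exp_pos _).le)]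
              exact (dom_bounds hα hn.1 hn.2.1 hn.2.2.1 x).1
            · exact ae_of_all _ fun x => hbf_nonneg _ _ _ _
          · -- A ≤ B again
            have hK := KK_le z hn.2.2.1 hn.2.2.2
            have h2 : ((⌈-(T n * s n) - z⌉ : ℤ) : ℝ) ≤ ((⌊T n * s n - z⌋ : ℤ) : ℝ) + 1 := by
              exact_mod_cast (by omega : (⌈-(T n * s n) - z⌉ : ℤ) ≤ ⌊T n * s n - z⌋ + 1)
            exact (div_le_div_iff_of_pos_right hs0).mpr (by linarith)

end Stmt10
end

section
/- For every α > 0 the equation (2λ·f_1(λ)·g_2(λ) − 3·f_2(2λ)) / (f_1(λ)·g_1(λ)) = α has a unique positive solution λ(α). Moreover, if (α_n) is a sequence of positive reals with α_n → 0, then λ(α_n) → 0. -/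
open Filter Topology

namespace Stmt14

/-- `f_k(x) = e^x − Σ_{i<k} x^i/i!`. -/
noncomputable def fpo (k : ℕ) (x : ℝ) : ℝ :=
  Real.exp x - ∑ i ∈ Finset.range k, x ^ i / (Nat.factorial i : ℝ)

/-- `g_k(x) = e^x + k`. -/
noncomputable def gpo (k : ℕ) (x : ℝ) : ℝ := Real.exp x + k

/-- The function in question, simplified. -/
noncomputable def FF (l : ℝ) : ℝ :=
  (2*l*(Real.exp l * Real.exp l + Real.exp l + 1) - 3*(Real.exp l * Real.exp l - 1)) /
    (Real.exp l * Real.exp l - 1)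

lemma exp_two_mul' (l : ℝ) : Real.exp (2*l) = Real.exp l * Real.exp l := by
  rw [two_mul, Real.exp_add]

lemma expr_eq (l : ℝ) :
    (2 * l * fpo 1 l * gpo 2 l - 3 * fpo 2 (2 * l)) / (fpo 1 l * gpo 1 l) = FF l := by
  simp only [fpo, gpo, FF, Finset.sum_range_succ, Finset.sum_range_zero, exp_two_mul']
  norm_num
  congr 1 <;> ring

/-- Key inequality A: `2x e^x < e^{2x} - 1` for `x > 0`. -/
lemma lemA {x : ℝ} (hx : 0 < x) : 2*x*Real.exp x < Real.exp (2*x) - 1 := by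
  have key : StrictMonoOn (fun x : ℝ => Real.exp (2*x) - 2*x*Real.exp x - 1) (Set.Ici 0) := by
    apply strictMonoOn_of_deriv_pos (convex_Ici 0)
    · fun_prop
    · intro y hy
      rw [interior_Ici] at hy
      have hq : HasDerivAt (fun x : ℝ => Real.exp (2*x) - 2*x*Real.exp x - 1)
          (Real.exp (2*y) * 2 - (2*Real.exp y + 2*y*Real.exp y)) y := by
        have h1 : HasDerivAt (fun x : ℝ => 2*x) 2 y := by
          simpa using (hasDerivAt_id y).const_mul 2
        have h2 := (h1.exp.sub (h1.mul (Real.hasDerivAt_exp y))).sub_const 1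
        exact h2
      rw [hq.deriv]
      have h3 := Real.add_one_lt_exp (ne_of_gt hy)
      have h4 : Real.exp (2*y) = Real.exp y * Real.exp y := exp_two_mul' y
      nlinarith [Real.exp_pos y]
  have := key Set.self_mem_Ici (Set.mem_Ici.mpr hx.le) hx
  simp at this
  linarith

/-- Key inequality B. -/
lemma lemB {x : ℝ} (hx : 0 < x) :
    x * ((Real.exp x)^3 + 4*(Real.exp x)^2 + Real.exp x)
      < (Real.exp x)^4 + (Real.exp x)^3 - Real.exp x - 1 := by
  set t := Real.exp x with ht
  have h1 : 2*x*t < t^2 - 1 := by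
    have := lemA hx
    rw [exp_two_mul'] at this
    nlinarith
  have ht1 : 1 < t := by
    rw [ht]
    calc (1:ℝ) = Real.exp 0 := (Real.exp_zero).symm
    _ < Real.exp x := Real.exp_lt_exp.mpr hx
  nlinarith [mul_lt_mul_of_pos_right h1 (show (0:ℝ) < t^2+4*t+1 by nlinarith),
    mul_nonneg (show (0:ℝ) ≤ t^2-1 by nlinarith) (sq_nonneg (t-1))]

lemma denom_pos {x : ℝ} (hx : 0 < x) : 0 < Real.exp x * Real.exp x - 1 := by
  have : 1 < Real.exp x := by
    calc (1:ℝ) = Real.exp 0 := (Real.exp_zero).symm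
    _ < Real.exp x := Real.exp_lt_exp.mpr hx
  nlinarith

lemma FF_strictMono : StrictMonoOn FF (Set.Ioi 0) := by
  apply strictMonoOn_of_deriv_pos (convex_Ioi 0)
  · apply ContinuousOn.div
    · fun_prop
    · fun_prop
    · intro x hx; exact ne_of_gt (denom_pos hx)
  · intro x hx
    rw [interior_Ioi] at hx
    set y := Real.exp x with hy
    have hD0 : y * y - 1 ≠ 0 := ne_of_gt (denom_pos hx)
    have he : HasDerivAt Real.exp y x := Real.hasDerivAt_exp x
    have hyy : HasDerivAt (fun x => Real.exp x * Real.exp x) (y*y + y*y) x := he.mul he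
    have hN : HasDerivAt (fun x => 2*x*(Real.exp x * Real.exp x + Real.exp x + 1)
        - 3*(Real.exp x * Real.exp x - 1))
        (2*(y*y+y+1) + 2*x*((y*y+y*y)+y) - 3*(y*y+y*y)) x := by
      have h1 : HasDerivAt (fun x : ℝ => 2*x) 2 x := by
        simpa using (hasDerivAt_id x).const_mul 2
      have := (h1.mul ((hyy.add he).add_const 1)).sub ((hyy.sub_const 1).const_mul 3)
      exact this
    have hD : HasDerivAt (fun x => Real.exp x * Real.exp x - 1) (y*y+y*y) x :=
      hyy.sub_const 1
    have hF : HasDerivAt FF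
        (((2*(y*y+y+1) + 2*x*((y*y+y*y)+y) - 3*(y*y+y*y)) * (y*y-1)
          - (2*x*(y*y+y+1) - 3*(y*y-1)) * (y*y+y*y)) / (y*y-1)^2) x := hN.div hD hD0
    rw [hF.deriv]
    apply div_pos
    · have hB := lemB hx
      nlinarith
    · positivity

/-- `FF` tends to `0` as `l → 0+`. -/
lemma FF_tendsto_zero : Tendsto FF (𝓝[>] (0:ℝ)) (𝓝 0) := by
  have hd : HasDerivAt (fun x : ℝ => Real.exp (2*x)) 2 0 := by
    have h1 : HasDerivAt (fun x : ℝ => 2*x) 2 (0:ℝ) := by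
      simpa using (hasDerivAt_id (0:ℝ)).const_mul 2
    simpa using h1.exp
  have hslope : Tendsto (fun l => (Real.exp (2*l) - 1)/l) (𝓝[≠] (0:ℝ)) (𝓝 2) := by
    have := hasDerivAt_iff_tendsto_slope.mp hd
    apply this.congr
    intro l
    simp [slope_def_field]
  have hslope' : Tendsto (fun l => (Real.exp (2*l) - 1)/l) (𝓝[>] (0:ℝ)) (𝓝 2) :=
    hslope.mono_left (nhdsWithin_mono 0 (fun x hx => ne_of_gt hx))
  have hA : Tendsto (fun l => 2*(Real.exp (2*l) + Real.exp l + 1)) (𝓝[>] (0:ℝ)) (𝓝 6) := by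
    have hc : Continuous (fun l : ℝ => 2*(Real.exp (2*l) + Real.exp l + 1)) := by fun_prop
    have h := (hc.tendsto 0).mono_left (nhdsWithin_le_nhds (s := Set.Ioi (0:ℝ)))
    norm_num at h
    exact h
  have hnum : Tendsto (fun l => 2*(Real.exp (2*l) + Real.exp l + 1)
      - 3*((Real.exp (2*l) - 1)/l)) (𝓝[>] (0:ℝ)) (𝓝 0) := by
    have := hA.sub (hslope'.const_mul 3)
    norm_num at this
    exact this
  have hmain := hnum.div hslope' (by norm_num)
  norm_num at hmain
  apply hmain.congr'
  filter_upwards [self_mem_nhdsWithin] with l hl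
  have hl0 : (l:ℝ) ≠ 0 := ne_of_gt hl
  have hD := denom_pos hl
  simp only [Pi.div_apply, FF, exp_two_mul']
  field_simp

lemma FF_pos {x : ℝ} (hx : 0 < x) : 0 < FF x := by
  have hhalf : x/2 ∈ Set.Ioi (0:ℝ) := Set.mem_Ioi.mpr (by linarith)
  have hxm : x ∈ Set.Ioi (0:ℝ) := hx
  have h2 : 0 ≤ FF (x/2) := by
    apply le_of_tendsto FF_tendsto_zero
    filter_upwards [Ioo_mem_nhdsGT_of_mem (Set.mem_Ico.mpr ⟨le_refl 0, half_pos hx⟩)] with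
      l hl
    exact (FF_strictMono hl.1 hhalf hl.2).le
  exact lt_of_le_of_lt h2 (FF_strictMono hhalf hxm (by linarith))

lemma FF_lower {x : ℝ} (hx : 0 < x) : 2*x - 3 ≤ FF x := by
  rw [FF, le_div_iff₀ (denom_pos hx)]
  nlinarith [Real.exp_pos x, denom_pos hx]

/-- For every `α > 0` the equation
`(2λ·f₁(λ)·g₂(λ) − 3·f₂(2λ))/(f₁(λ)·g₁(λ)) = α` has a unique positive solution, and if
`α_n → 0` (with `α_n > 0`) then the corresponding solutions tend to `0`. -/
theorem stmt14 :
    (∀ α : ℝ, 0 < α →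
      ∃! l : ℝ, 0 < l ∧
        (2 * l * fpo 1 l * gpo 2 l - 3 * fpo 2 (2 * l)) / (fpo 1 l * gpo 1 l) = α) ∧
    (∀ a l : ℕ → ℝ, (∀ n, 0 < a n) → Tendsto a atTop (𝓝 0) →
      (∀ n, 0 < l n ∧
        (2 * l n * fpo 1 (l n) * gpo 2 (l n) - 3 * fpo 2 (2 * l n)) /
          (fpo 1 (l n) * gpo 1 (l n)) = a n) →
      Tendsto l atTop (𝓝 0)) := by
  constructor
  · intro α hα
    simp only [expr_eq]
    -- find a with FF a < α
    have hev : ∀ᶠ l in 𝓝[>] (0:ℝ), FF l < α :=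
      FF_tendsto_zero.eventually_lt_const hα
    obtain ⟨a, ha, haI⟩ := (hev.and self_mem_nhdsWithin).exists
    have ha0 : 0 < a := haI
    -- choose b
    set b := max a ((α+3)/2 + 1) with hb
    have hab : a ≤ b := le_max_left _ _
    have hb0 : 0 < b := lt_of_lt_of_le ha0 hab
    have hFb : α < FF b := by
      have h1 : (α+3)/2 + 1 ≤ b := le_max_right _ _
      have := FF_lower hb0
      linarith
    have hcont : ContinuousOn FF (Set.Icc a b) := by
      apply ContinuousOn.div
      · fun_prop
      · fun_prop
      · intro x hx; exact ne_of_gt (denom_pos (lt_of_lt_of_le ha0 hx.1))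
    obtain ⟨l, hlmem, hFl⟩ := intermediate_value_Icc hab hcont
      (Set.mem_Icc.mpr ⟨ha.le, hFb.le⟩)
    have hl0 : 0 < l := lt_of_lt_of_le ha0 hlmem.1
    refine ⟨l, ⟨hl0, hFl⟩, ?_⟩
    rintro y ⟨hy0, hFy⟩
    exact FF_strictMono.injOn (Set.mem_Ioi.mpr hy0) (Set.mem_Ioi.mpr hl0)
      (hFy.trans hFl.symm)
  · intro a l ha hato hl
    rw [tendsto_order]
    constructor
    · intro b hb
      exact Eventually.of_forall fun n => lt_trans hb (hl n).1
    · intro b hb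
      have hFb : 0 < FF b := FF_pos hb
      filter_upwards [hato.eventually_lt_const hFb] with n hn
      by_contra hcon
      push_neg at hcon
      have : FF b ≤ FF (l n) :=
        FF_strictMono.monotoneOn (Set.mem_Ioi.mpr hb)
          (Set.mem_Ioi.mpr (hl n).1) hcon
      have heq : FF (l n) = a n := by rw [← expr_eq]; exact (hl n).2
      linarith

end Stmt14
end
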